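/- arXiv:1106.2993 — 2 statements merged into one kernel-verified Lean document; each statement's English description precedes it below -/
import Mathlib

section
/- Let b₀, b₁ > 0 with b₀ + b₁ < 1, set b = (b₀ + b₁)/2 and b̂ = 1 − √2/2. Let μ* be the (b₀,b₁)-branching measure on C and T the associated capacity. If b ≥ b̂ and |b₀ − b₁| ≤ √(8b − 4b² − 2), then for μ*-almost every R ∈ C, T(R) = 0. -/
open Set MeasureTheory Topology Filter

/-- Cantor space `2^ℕ`. -/
abbrev Cantor : Type := ℕ → Bool

/-- The basic interval `I(σ)` of all extensions of the finite binary string `σ`. -/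
def cyl (σ : List Bool) : Set Cantor :=
  {x | ∀ i : Fin σ.length, x i = σ.get i}

/-- The space `C` of nonempty closed subsets of Cantor space. -/
abbrev CC : Type := {K : Set Cantor // K.Nonempty ∧ IsClosed K}

/-- The hit-or-miss topology on `C`, generated by the sets
`V(U) = {K : K ∩ U ≠ ∅}` and `W(U) = {K : K ⊆ U}` for `U` open. -/
instance (priority := 10000) hitMissTop : TopologicalSpace CC :=
  TopologicalSpace.generateFrom
    ({S | ∃ U : Set Cantor, IsOpen U ∧ S = {K : CC | (K.1 ∩ U).Nonempty}} ∪
     {S | ∃ U : Set Cantor, IsOpen U ∧ S = {K : CC | K.1 ⊆ U}})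

/-- The Borel σ-algebra of the hit-or-miss topology. -/
instance (priority := 10000) hitMissMeasurable : MeasurableSpace CC := borel CC

/-- `A` is a finite tree of height `n` without dead ends. -/
def FinTree (n : ℕ) (A : Finset (List Bool)) : Prop :=
  A.Nonempty ∧
  (∀ σ ∈ A, σ.length ≤ n) ∧
  (∀ σ τ : List Bool, σ <+: τ → τ ∈ A → σ ∈ A) ∧
  (∀ σ ∈ A, σ.length < n → σ ++ [false] ∈ A ∨ σ ++ [true] ∈ A)

/-- `U_A = {K ∈ C : T_K ∩ {0,1}^{≤ n} = A}`. -/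
def UA (n : ℕ) (A : Finset (List Bool)) : Set CC :=
  {K | ∀ σ : List Bool, σ.length ≤ n → (σ ∈ A ↔ (K.1 ∩ cyl σ).Nonempty)}

/-- The weight of a node `σ` of `A` in the symmetric branching process with parameter `β`. -/
noncomputable def symWeight (β : List Bool → ℝ) (A : Finset (List Bool)) (σ : List Bool) : ℝ :=
  if σ ++ [false] ∈ A ∧ σ ++ [true] ∈ A then 1 - 2 * β σ else β σ

/-- `μ` is the symmetric branching measure on `C` with parameter `β`. -/
def IsSymBranching (β : List Bool → ℝ) (μ : Measure CC) : Prop :=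
  IsProbabilityMeasure μ ∧
  ∀ (n : ℕ) (A : Finset (List Bool)), FinTree n A →
    (μ (UA n A)).toReal = ∏ σ ∈ A.filter (fun σ => σ.length < n), symWeight β A σ

/-- The weight of a node `σ` of `A` in the `(b₀,b₁)`-branching process. -/
noncomputable def asymWeight (b0 b1 : ℝ) (A : Finset (List Bool)) (σ : List Bool) : ℝ :=
  if σ ++ [false] ∈ A ∧ σ ++ [true] ∈ A then 1 - b0 - b1
  else if σ ++ [false] ∈ A then b0 else b1

/-- `μ` is the `(b₀,b₁)`-branching measure on `C`. -/
def IsBranching (b0 b1 : ℝ) (μ : Measure CC) : Prop :=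
  IsProbabilityMeasure μ ∧
  ∀ (n : ℕ) (A : Finset (List Bool)), FinTree n A →
    (μ (UA n A)).toReal = ∏ σ ∈ A.filter (fun σ => σ.length < n), asymWeight b0 b1 A σ

/-- The capacity `T(Q) = μ*({K ∈ C : K ∩ Q ≠ ∅})` associated to a measure on `C`. -/
noncomputable def cap (μ : Measure CC) (Q : Set Cantor) : ℝ :=
  (μ {K : CC | (K.1 ∩ Q).Nonempty}).toReal



namespace Stmt2

inductive BT : ℕ → Type
  | leaf : BT 0
  | lf {n : ℕ} : BT n → BT (n+1)
  | rt {n : ℕ} : BT n → BT (n+1)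
  | bo {n : ℕ} : BT n → BT n → BT (n+1)
  deriving DecidableEq

def equivSucc (n : ℕ) : BT (n+1) ≃ (BT n ⊕ BT n ⊕ BT n × BT n) where
  toFun t := match t with
    | .lf t => .inl t
    | .rt t => .inr (.inl t)
    | .bo s t => .inr (.inr (s, t))
  invFun x := match x with
    | .inl t => .lf t
    | .inr (.inl t) => .rt t
    | .inr (.inr (s,t)) => .bo s t
  left_inv t := by cases t <;> rfl
  right_inv x := by rcases x with t | t | ⟨s,t⟩ <;> rfl

instance instUniqueBT0 : Unique (BT 0) where
  default := .leaf
  uniq t := by cases t; rfl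

instance instFintypeBT : ∀ n, Fintype (BT n)
  | 0 => Fintype.ofEquiv Unit (Equiv.ofUnique Unit (BT 0))
  | (n+1) =>
    letI := instFintypeBT n
    Fintype.ofEquiv _ (equivSucc n).symm

lemma sum_split {n : ℕ} (f : BT (n+1) → ℝ) :
    ∑ x : BT (n+1), f x
      = (∑ t : BT n, f (.lf t)) + (∑ t : BT n, f (.rt t))
        + ∑ s : BT n, ∑ t : BT n, f (.bo s t) := by
  rw [← Equiv.sum_comp (equivSucc n).symm f, Fintype.sum_sum_type, Fintype.sum_sum_type,
    Fintype.sum_prod_type]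
  simp [equivSucc, add_assoc]

noncomputable def wt (b0 b1 : ℝ) : ∀ {n : ℕ}, BT n → ℝ
  | _, .leaf => 1
  | _, .lf t => b0 * wt b0 b1 t
  | _, .rt t => b1 * wt b0 b1 t
  | _, .bo s t => (1 - b0 - b1) * wt b0 b1 s * wt b0 b1 t

def sv : ∀ {n : ℕ}, BT n → BT n → Bool
  | _, .leaf, .leaf => true
  | _, .lf s, .lf t => sv s t
  | _, .lf s, .bo t _ => sv s t
  | _, .rt s, .rt t => sv s t
  | _, .rt s, .bo _ t => sv s t
  | _, .bo s _, .lf t => sv s t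
  | _, .bo _ s', .rt t => sv s' t
  | _, .bo s s', .bo t t' => sv s t || sv s' t'
  | _, .lf _, .rt _ => false
  | _, .rt _, .lf _ => false

/-- indicator of a Bool -/
def chi (b : Bool) : ℝ := if b then 1 else 0

lemma chi_nonneg (b : Bool) : 0 ≤ chi b := by cases b <;> simp [chi]

lemma chi_or (a b : Bool) : chi (a || b) = chi a + chi b - chi a * chi b := by
  cases a <;> cases b <;> simp [chi]

section params
variable (b0 b1 : ℝ)

lemma wt_pos (h0 : 0 < b0) (h1 : 0 < b1) (hs : b0 + b1 < 1) :
    ∀ {n : ℕ} (t : BT n), 0 < wt b0 b1 t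
  | _, .leaf => by simp [wt]
  | _, .lf t => by
      have := wt_pos h0 h1 hs t
      simp only [wt]; positivity
  | _, .rt t => by
      have := wt_pos h0 h1 hs t
      simp only [wt]; positivity
  | _, .bo s t => by
      have hc : 0 < 1 - b0 - b1 := by linarith
      have hs' := wt_pos h0 h1 hs s
      have ht' := wt_pos h0 h1 hs t
      simp only [wt]; positivity

lemma sum_wt : ∀ n : ℕ, ∑ t : BT n, wt b0 b1 t = 1
  | 0 => by rw [Fintype.sum_unique]; rfl
  | (n+1) => by
      rw [sum_split]
      have ih := sum_wt n
      simp only [wt]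
      rw [← Finset.mul_sum, ih, mul_one]
      have : ∀ s : BT n, ∑ t : BT n, (1 - b0 - b1) * wt b0 b1 s * wt b0 b1 t
          = (1 - b0 - b1) * wt b0 b1 s := by
        intro s; rw [← Finset.mul_sum, ih, mul_one]
      simp_rw [this]
      rw [← Finset.mul_sum, ih, mul_one, ← Finset.mul_sum, ih]
      ring

/-- probability that two independent branching trees of height `n` share a node at level `n` -/
noncomputable def qq (n : ℕ) : ℝ :=
  ∑ s : BT n, ∑ t : BT n, chi (sv s t) * wt b0 b1 s * wt b0 b1 t

lemma qq_nonneg (h0 : 0 < b0) (h1 : 0 < b1) (hs : b0 + b1 < 1) (n : ℕ) :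
    0 ≤ qq b0 b1 n := by
  apply Finset.sum_nonneg; intro s _
  apply Finset.sum_nonneg; intro t _
  have := wt_pos b0 b1 h0 h1 hs s
  have := wt_pos b0 b1 h0 h1 hs t
  have := chi_nonneg (sv s t)
  positivity

lemma qq_zero : qq b0 b1 0 = 1 := by
  unfold qq
  rw [Fintype.sum_unique, Fintype.sum_unique]
  show chi (sv .leaf .leaf) * wt b0 b1 .leaf * wt b0 b1 .leaf = 1
  simp [sv, wt, chi]

end params

@[simp] lemma chi_false : chi false = 0 := rfl
@[simp] lemma chi_true : chi true = 1 := rfl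

section params
variable (b0 b1 : ℝ) {n : ℕ}

lemma H0 (X : ℝ) : ∑ t : BT n, X * wt b0 b1 t = X := by
  rw [← Finset.mul_sum, sum_wt, mul_one]

lemma HP (X : ℝ) : ∑ s : BT n, ∑ t : BT n, X * (wt b0 b1 s * wt b0 b1 t) = X := by
  have h : ∀ s t : BT n, X * (wt b0 b1 s * wt b0 b1 t) = X * wt b0 b1 s * wt b0 b1 t :=
    fun s t => by ring
  simp_rw [h]
  have h2 : ∀ s : BT n, ∑ t : BT n, X * wt b0 b1 s * wt b0 b1 t = X * wt b0 b1 s :=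
    fun s => H0 b0 b1 _
  simp_rw [h2]
  exact H0 b0 b1 X

lemma HQ (X : ℝ) :
    ∑ s : BT n, ∑ t : BT n, X * (chi (sv s t) * wt b0 b1 s * wt b0 b1 t)
      = X * qq b0 b1 n := by
  simp_rw [← Finset.mul_sum]; rfl

lemma qq_succ (n : ℕ) :
    qq b0 b1 (n+1)
      = ((1-b0)^2 + (1-b1)^2) * qq b0 b1 n - (1-b0-b1)^2 * (qq b0 b1 n)^2 := by
  have hw : ∑ t : BT n, wt b0 b1 t = 1 := sum_wt b0 b1 n
  have hinL : ∀ s : BT n,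
      ∑ y : BT (n+1), chi (sv (.lf s) y) * wt b0 b1 (.lf s) * wt b0 b1 y
        = (∑ t : BT n, chi (sv s t) * (b0 * wt b0 b1 s) * (b0 * wt b0 b1 t))
          + ∑ t : BT n, ∑ t' : BT n, chi (sv s t) * (b0 * wt b0 b1 s)
              * ((1-b0-b1) * wt b0 b1 t * wt b0 b1 t') := by
    intro s
    rw [sum_split (fun y => chi (sv (.lf s) y) * wt b0 b1 (.lf s) * wt b0 b1 y)]
    simp only [sv, wt, chi_false, zero_mul, Finset.sum_const_zero, add_zero]
  have hinR : ∀ s : BT n,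
      ∑ y : BT (n+1), chi (sv (.rt s) y) * wt b0 b1 (.rt s) * wt b0 b1 y
        = (∑ t : BT n, chi (sv s t) * (b1 * wt b0 b1 s) * (b1 * wt b0 b1 t))
          + ∑ t : BT n, ∑ t' : BT n, chi (sv s t') * (b1 * wt b0 b1 s)
              * ((1-b0-b1) * wt b0 b1 t * wt b0 b1 t') := by
    intro s
    rw [sum_split (fun y => chi (sv (.rt s) y) * wt b0 b1 (.rt s) * wt b0 b1 y)]
    simp only [sv, wt, chi_false, zero_mul, Finset.sum_const_zero, zero_add]
  have hinB : ∀ s s' : BT n,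
      ∑ y : BT (n+1), chi (sv (.bo s s') y) * wt b0 b1 (.bo s s') * wt b0 b1 y
        = (∑ t : BT n, chi (sv s t) * ((1-b0-b1) * wt b0 b1 s * wt b0 b1 s') * (b0 * wt b0 b1 t))
          + (∑ t : BT n, chi (sv s' t) * ((1-b0-b1) * wt b0 b1 s * wt b0 b1 s') * (b1 * wt b0 b1 t))
          + ∑ t : BT n, ∑ t' : BT n, chi (sv s t || sv s' t')
              * ((1-b0-b1) * wt b0 b1 s * wt b0 b1 s')
              * ((1-b0-b1) * wt b0 b1 t * wt b0 b1 t') := by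
    intro s s'
    rw [sum_split (fun y => chi (sv (.bo s s') y) * wt b0 b1 (.bo s s') * wt b0 b1 y)]
    simp only [sv, wt]
  have goal_lhs : qq b0 b1 (n+1)
      = (∑ s : BT n, ((∑ t : BT n, chi (sv s t) * (b0 * wt b0 b1 s) * (b0 * wt b0 b1 t))
          + ∑ t : BT n, ∑ t' : BT n, chi (sv s t) * (b0 * wt b0 b1 s)
              * ((1-b0-b1) * wt b0 b1 t * wt b0 b1 t')))
        + (∑ s : BT n, ((∑ t : BT n, chi (sv s t) * (b1 * wt b0 b1 s) * (b1 * wt b0 b1 t))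
          + ∑ t : BT n, ∑ t' : BT n, chi (sv s t') * (b1 * wt b0 b1 s)
              * ((1-b0-b1) * wt b0 b1 t * wt b0 b1 t')))
        + ∑ s : BT n, ∑ s' : BT n,
            ((∑ t : BT n, chi (sv s t) * ((1-b0-b1) * wt b0 b1 s * wt b0 b1 s') * (b0 * wt b0 b1 t))
          + (∑ t : BT n, chi (sv s' t) * ((1-b0-b1) * wt b0 b1 s * wt b0 b1 s') * (b1 * wt b0 b1 t))
          + ∑ t : BT n, ∑ t' : BT n, chi (sv s t || sv s' t')
              * ((1-b0-b1) * wt b0 b1 s * wt b0 b1 s')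
              * ((1-b0-b1) * wt b0 b1 t * wt b0 b1 t')) := by
    show (∑ x : BT (n+1), ∑ y : BT (n+1), chi (sv x y) * wt b0 b1 x * wt b0 b1 y) = _
    rw [sum_split (fun x => ∑ y : BT (n+1), chi (sv x y) * wt b0 b1 x * wt b0 b1 y)]
    simp_rw [hinL, hinR, hinB]
  rw [goal_lhs]
  have c1 : ∑ s : BT n, ∑ t : BT n, chi (sv s t) * (b0 * wt b0 b1 s) * (b0 * wt b0 b1 t)
      = b0 * b0 * qq b0 b1 n := by
    have h : ∀ s t : BT n, chi (sv s t) * (b0 * wt b0 b1 s) * (b0 * wt b0 b1 t)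
        = (b0 * b0) * (chi (sv s t) * wt b0 b1 s * wt b0 b1 t) := fun s t => by ring
    simp_rw [h]; exact HQ b0 b1 _
  have c3 : ∑ s : BT n, ∑ t : BT n, ∑ t' : BT n,
      chi (sv s t) * (b0 * wt b0 b1 s) * ((1-b0-b1) * wt b0 b1 t * wt b0 b1 t')
      = b0 * (1-b0-b1) * qq b0 b1 n := by
    have h : ∀ s t t' : BT n,
        chi (sv s t) * (b0 * wt b0 b1 s) * ((1-b0-b1) * wt b0 b1 t * wt b0 b1 t')
        = (b0 * (1-b0-b1)) * (chi (sv s t) * wt b0 b1 s * wt b0 b1 t) * wt b0 b1 t' :=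
      fun s t t' => by ring
    simp_rw [h, H0 b0 b1]
    exact HQ b0 b1 _
  have c5 : ∑ s : BT n, ∑ t : BT n, chi (sv s t) * (b1 * wt b0 b1 s) * (b1 * wt b0 b1 t)
      = b1 * b1 * qq b0 b1 n := by
    have h : ∀ s t : BT n, chi (sv s t) * (b1 * wt b0 b1 s) * (b1 * wt b0 b1 t)
        = (b1 * b1) * (chi (sv s t) * wt b0 b1 s * wt b0 b1 t) := fun s t => by ring
    simp_rw [h]; exact HQ b0 b1 _
  have c6 : ∑ s : BT n, ∑ t : BT n, ∑ t' : BT n,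
      chi (sv s t') * (b1 * wt b0 b1 s) * ((1-b0-b1) * wt b0 b1 t * wt b0 b1 t')
      = b1 * (1-b0-b1) * qq b0 b1 n := by
    have hsw : (∑ s : BT n, ∑ t : BT n, ∑ t' : BT n,
        chi (sv s t') * (b1 * wt b0 b1 s) * ((1-b0-b1) * wt b0 b1 t * wt b0 b1 t'))
        = ∑ s : BT n, ∑ t' : BT n, ∑ t : BT n,
        chi (sv s t') * (b1 * wt b0 b1 s) * ((1-b0-b1) * wt b0 b1 t * wt b0 b1 t') :=
      Finset.sum_congr rfl fun s _ => Finset.sum_comm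
    rw [hsw]
    have h : ∀ s t' t : BT n,
        chi (sv s t') * (b1 * wt b0 b1 s) * ((1-b0-b1) * wt b0 b1 t * wt b0 b1 t')
        = (b1 * (1-b0-b1)) * (chi (sv s t') * wt b0 b1 s * wt b0 b1 t') * wt b0 b1 t :=
      fun s t' t => by ring
    simp_rw [h, H0 b0 b1]
    exact HQ b0 b1 _
  have c7 : ∑ s : BT n, ∑ s' : BT n, ∑ t : BT n,
      chi (sv s t) * ((1-b0-b1) * wt b0 b1 s * wt b0 b1 s') * (b0 * wt b0 b1 t)
      = (1-b0-b1) * b0 * qq b0 b1 n := by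
    have hsw : (∑ s : BT n, ∑ s' : BT n, ∑ t : BT n,
        chi (sv s t) * ((1-b0-b1) * wt b0 b1 s * wt b0 b1 s') * (b0 * wt b0 b1 t))
        = ∑ s : BT n, ∑ t : BT n, ∑ s' : BT n,
        chi (sv s t) * ((1-b0-b1) * wt b0 b1 s * wt b0 b1 s') * (b0 * wt b0 b1 t) :=
      Finset.sum_congr rfl fun s _ => Finset.sum_comm
    rw [hsw]
    have h : ∀ s t s' : BT n,
        chi (sv s t) * ((1-b0-b1) * wt b0 b1 s * wt b0 b1 s') * (b0 * wt b0 b1 t)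
        = ((1-b0-b1) * b0) * (chi (sv s t) * wt b0 b1 s * wt b0 b1 t) * wt b0 b1 s' :=
      fun s t s' => by ring
    simp_rw [h, H0 b0 b1]
    exact HQ b0 b1 _
  have c8 : ∑ s : BT n, ∑ s' : BT n, ∑ t : BT n,
      chi (sv s' t) * ((1-b0-b1) * wt b0 b1 s * wt b0 b1 s') * (b1 * wt b0 b1 t)
      = (1-b0-b1) * b1 * qq b0 b1 n := by
    rw [Finset.sum_comm]
    have hsw : (∑ s' : BT n, ∑ s : BT n, ∑ t : BT n,
        chi (sv s' t) * ((1-b0-b1) * wt b0 b1 s * wt b0 b1 s') * (b1 * wt b0 b1 t))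
        = ∑ s' : BT n, ∑ t : BT n, ∑ s : BT n,
        chi (sv s' t) * ((1-b0-b1) * wt b0 b1 s * wt b0 b1 s') * (b1 * wt b0 b1 t) :=
      Finset.sum_congr rfl fun s' _ => Finset.sum_comm
    rw [hsw]
    have h : ∀ s' t s : BT n,
        chi (sv s' t) * ((1-b0-b1) * wt b0 b1 s * wt b0 b1 s') * (b1 * wt b0 b1 t)
        = ((1-b0-b1) * b1) * (chi (sv s' t) * wt b0 b1 s' * wt b0 b1 t) * wt b0 b1 s :=
      fun s' t s => by ring
    simp_rw [h, H0 b0 b1]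
    exact HQ b0 b1 _
  have c9 : ∑ s : BT n, ∑ s' : BT n, ∑ t : BT n, ∑ t' : BT n,
      chi (sv s t || sv s' t') * ((1-b0-b1) * wt b0 b1 s * wt b0 b1 s')
        * ((1-b0-b1) * wt b0 b1 t * wt b0 b1 t')
      = (1-b0-b1) * (1-b0-b1) * qq b0 b1 n
        + (1-b0-b1) * (1-b0-b1) * qq b0 b1 n
        - ((1-b0-b1) * (1-b0-b1) * qq b0 b1 n) * qq b0 b1 n := by
    have hsw : (∑ s : BT n, ∑ s' : BT n, ∑ t : BT n, ∑ t' : BT n,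
        chi (sv s t || sv s' t') * ((1-b0-b1) * wt b0 b1 s * wt b0 b1 s')
          * ((1-b0-b1) * wt b0 b1 t * wt b0 b1 t'))
        = ∑ s : BT n, ∑ t : BT n, ∑ s' : BT n, ∑ t' : BT n,
        chi (sv s t || sv s' t') * ((1-b0-b1) * wt b0 b1 s * wt b0 b1 s')
          * ((1-b0-b1) * wt b0 b1 t * wt b0 b1 t') :=
      Finset.sum_congr rfl fun s _ => Finset.sum_comm
    rw [hsw]
    have h : ∀ s t s' t' : BT n,
        chi (sv s t || sv s' t') * ((1-b0-b1) * wt b0 b1 s * wt b0 b1 s')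
          * ((1-b0-b1) * wt b0 b1 t * wt b0 b1 t')
        = ((1-b0-b1) * (1-b0-b1) * (chi (sv s t) * wt b0 b1 s * wt b0 b1 t))
            * (wt b0 b1 s' * wt b0 b1 t')
          + ((1-b0-b1) * (1-b0-b1) * (wt b0 b1 s * wt b0 b1 t))
            * (chi (sv s' t') * wt b0 b1 s' * wt b0 b1 t')
          - ((1-b0-b1) * (1-b0-b1) * (chi (sv s t) * wt b0 b1 s * wt b0 b1 t))
            * (chi (sv s' t') * wt b0 b1 s' * wt b0 b1 t') := by
      intro s t s' t'
      rw [chi_or]; ring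
    rw [Finset.sum_congr rfl fun s _ => Finset.sum_congr rfl fun t _ =>
      Finset.sum_congr rfl fun s' _ => Finset.sum_congr rfl fun t' _ => h s t s' t']
    simp only [Finset.sum_sub_distrib, Finset.sum_add_distrib]
    simp_rw [HP b0 b1, HQ b0 b1]
    have hB : ∑ s : BT n, ∑ t : BT n,
        ((1-b0-b1) * (1-b0-b1) * (wt b0 b1 s * wt b0 b1 t)) * qq b0 b1 n
        = (1-b0-b1) * (1-b0-b1) * qq b0 b1 n := by
      have h2 : ∀ s t : BT n,
          ((1-b0-b1) * (1-b0-b1) * (wt b0 b1 s * wt b0 b1 t)) * qq b0 b1 n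
          = ((1-b0-b1) * (1-b0-b1) * qq b0 b1 n) * (wt b0 b1 s * wt b0 b1 t) :=
        fun s t => by ring
      simp_rw [h2]
      exact HP b0 b1 _
    have hC : ∑ s : BT n, ∑ t : BT n,
        ((1-b0-b1) * (1-b0-b1) * (chi (sv s t) * wt b0 b1 s * wt b0 b1 t)) * qq b0 b1 n
        = ((1-b0-b1) * (1-b0-b1) * qq b0 b1 n) * qq b0 b1 n := by
      have h2 : ∀ s t : BT n,
          ((1-b0-b1) * (1-b0-b1) * (chi (sv s t) * wt b0 b1 s * wt b0 b1 t)) * qq b0 b1 n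
          = ((1-b0-b1) * (1-b0-b1) * qq b0 b1 n)
              * (chi (sv s t) * wt b0 b1 s * wt b0 b1 t) := fun s t => by ring
      simp_rw [h2]
      exact HQ b0 b1 _
    rw [hB, hC]
  simp_rw [Finset.sum_add_distrib]
  rw [c1, c3, c5, c6, c7, c8, c9]
  ring


lemma qq_le_one (h0 : 0 < b0) (h1 : 0 < b1) (hs : b0 + b1 < 1) (n : ℕ) :
    qq b0 b1 n ≤ 1 := by
  have := HP b0 b1 (n := n) 1
  calc qq b0 b1 n ≤ ∑ s : BT n, ∑ t : BT n, 1 * (wt b0 b1 s * wt b0 b1 t) := by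
        apply Finset.sum_le_sum; intro s _
        apply Finset.sum_le_sum; intro t _
        have hws := (wt_pos b0 b1 h0 h1 hs s).le
        have hwt := (wt_pos b0 b1 h0 h1 hs t).le
        have hchi : chi (sv s t) ≤ 1 := by cases (sv s t) <;> simp [chi]
        have : chi (sv s t) * wt b0 b1 s * wt b0 b1 t
            ≤ 1 * (wt b0 b1 s * wt b0 b1 t) := by
          rw [one_mul]
          calc chi (sv s t) * wt b0 b1 s * wt b0 b1 t
              ≤ 1 * wt b0 b1 s * wt b0 b1 t := by
                apply mul_le_mul_of_nonneg_right _ hwt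
                exact mul_le_mul_of_nonneg_right hchi hws
            _ = wt b0 b1 s * wt b0 b1 t := by ring
        exact this
    _ = 1 := this

lemma qq_mul_bound (h0 : 0 < b0) (h1 : 0 < b1) (hs : b0 + b1 < 1)
    (hm : (1-b0)^2 + (1-b1)^2 ≤ 1) (ha2 : (1-b0-b1)^2 ≤ 1/2) :
    ∀ n : ℕ, qq b0 b1 n * ((1-b0-b1)^2 * n + 1) ≤ 1 := by
  intro n
  induction n with
  | zero => simp [qq_zero]
  | succ n ih =>
    set a : ℝ := (1-b0-b1)^2 with hadef
    have ha : 0 < a := by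
      have : 0 < 1 - b0 - b1 := by linarith
      positivity
    set q : ℝ := qq b0 b1 n with hqdef
    have hq0 : 0 ≤ q := qq_nonneg b0 b1 h0 h1 hs n
    have hq1 : q ≤ 1 := qq_le_one b0 b1 h0 h1 hs n
    have hrec : qq b0 b1 (n+1) = ((1-b0)^2 + (1-b1)^2) * q - a * q^2 := qq_succ b0 b1 n
    have hstep : qq b0 b1 (n+1) ≤ q - a * q^2 := by
      rw [hrec]
      have : ((1-b0)^2 + (1-b1)^2) * q ≤ 1 * q :=
        mul_le_mul_of_nonneg_right hm hq0
      linarith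
    have hnn : (0:ℝ) ≤ a * n := by positivity
    have hu : (1:ℝ) ≤ a * n + 1 := by linarith
    have hD : 0 ≤ 1 - q * (a * n + 1) := by linarith [ih]
    have h1aq : 0 ≤ 1 - a * q := by nlinarith
    have key : (q - a * q^2) * (a * (n+1) + 1) ≤ 1 := by
      have expand : (q - a * q^2) * (a * (n+1) + 1)
          = 1 - (1 - q * (a*n+1)) * (1 - a*q) - (a*q)^2 := by push_cast; ring
      rw [expand]
      nlinarith [mul_nonneg hD h1aq, sq_nonneg (a*q)]
    have hpos : (0:ℝ) ≤ a * (n+1) + 1 := by positivity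
    push_cast
    calc qq b0 b1 (n+1) * (a * (n+1) + 1)
        ≤ (q - a * q^2) * (a * (n+1) + 1) := by
          apply mul_le_mul_of_nonneg_right hstep hpos
      _ ≤ 1 := key


end params

/-! ### embedding of abstract trees as finite trees of strings -/

def emb : ∀ {n : ℕ}, BT n → Finset (List Bool)
  | _, .leaf => {[]}
  | _, .lf t => insert [] ((emb t).image (List.cons false))
  | _, .rt t => insert [] ((emb t).image (List.cons true))
  | _, .bo s t =>
      insert [] (((emb s).image (List.cons false)) ∪ ((emb t).image (List.cons true)))

@[simp] lemma nil_mem_emb : ∀ {n : ℕ} (t : BT n), [] ∈ emb t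
  | _, .leaf => by simp [emb]
  | _, .lf t => by simp [emb]
  | _, .rt t => by simp [emb]
  | _, .bo s t => by simp [emb]

@[simp] lemma mem_emb_lf {n : ℕ} (t : BT n) (b : Bool) (σ : List Bool) :
    (b :: σ) ∈ emb (.lf t) ↔ (b = false ∧ σ ∈ emb t) := by
  simp only [emb, Finset.mem_insert, Finset.mem_image, List.cons.injEq]
  constructor
  · rintro (h | ⟨τ, hτ, h1, h2⟩)
    · simp at h
    · exact ⟨h1.symm, h2 ▸ hτ⟩
  · rintro ⟨rfl, h⟩
    exact Or.inr ⟨σ, h, rfl, rfl⟩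

@[simp] lemma mem_emb_rt {n : ℕ} (t : BT n) (b : Bool) (σ : List Bool) :
    (b :: σ) ∈ emb (.rt t) ↔ (b = true ∧ σ ∈ emb t) := by
  simp only [emb, Finset.mem_insert, Finset.mem_image, List.cons.injEq]
  constructor
  · rintro (h | ⟨τ, hτ, h1, h2⟩)
    · simp at h
    · exact ⟨h1.symm, h2 ▸ hτ⟩
  · rintro ⟨rfl, h⟩
    exact Or.inr ⟨σ, h, rfl, rfl⟩

@[simp] lemma mem_emb_bo {n : ℕ} (s t : BT n) (b : Bool) (σ : List Bool) :
    (b :: σ) ∈ emb (.bo s t) ↔ ((b = false ∧ σ ∈ emb s) ∨ (b = true ∧ σ ∈ emb t)) := by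
  simp only [emb, Finset.mem_insert, Finset.mem_union, Finset.mem_image, List.cons.injEq]
  constructor
  · rintro (h | ⟨τ, hτ, h1, h2⟩ | ⟨τ, hτ, h1, h2⟩)
    · simp at h
    · exact Or.inl ⟨h1.symm, h2 ▸ hτ⟩
    · exact Or.inr ⟨h1.symm, h2 ▸ hτ⟩
  · rintro (⟨rfl, h⟩ | ⟨rfl, h⟩)
    · exact Or.inr (Or.inl ⟨σ, h, rfl, rfl⟩)
    · exact Or.inr (Or.inr ⟨σ, h, rfl, rfl⟩)

lemma mem_emb_length : ∀ {n : ℕ} (t : BT n) (σ : List Bool), σ ∈ emb t → σ.length ≤ n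
  | _, .leaf, σ, h => by simp [emb] at h; simp [h]
  | _, .lf t, [], _ => by simp
  | _, .lf t, b :: σ, h => by
      rw [mem_emb_lf] at h
      have := mem_emb_length t σ h.2
      simp; omega
  | _, .rt t, [], _ => by simp
  | _, .rt t, b :: σ, h => by
      rw [mem_emb_rt] at h
      have := mem_emb_length t σ h.2
      simp; omega
  | _, .bo s t, [], _ => by simp
  | _, .bo s t, b :: σ, h => by
      rw [mem_emb_bo] at h
      rcases h with ⟨_, h⟩ | ⟨_, h⟩
      · have := mem_emb_length s σ h; simp; omega
      · have := mem_emb_length t σ h; simp; omega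

lemma finTree_emb : ∀ {n : ℕ} (t : BT n), FinTree n (emb t)
  | _, .leaf => by
    refine ⟨⟨[], by simp [emb]⟩, fun σ h => by simp [emb] at h; simp [h], ?_, ?_⟩
    · intro σ τ hp hτ
      simp [emb] at hτ ⊢
      subst hτ
      exact List.prefix_nil.mp hp
    · intro σ _ h; omega
  | _, @BT.lf n t => by
    obtain ⟨-, -, hpre, hde⟩ := finTree_emb t
    refine ⟨⟨[], by simp⟩, mem_emb_length _, ?_, ?_⟩
    · intro σ τ hp hτ
      match τ, hτ with
      | [], _ => rw [List.prefix_nil.mp hp]; simp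
      | b :: τ', hτ =>
        rw [mem_emb_lf] at hτ
        obtain ⟨rfl, hτ'⟩ := hτ
        match σ, hp with
        | [], _ => simp
        | c :: σ', hp =>
          obtain ⟨rfl, hp'⟩ := List.cons_prefix_cons.mp hp
          rw [mem_emb_lf]
          exact ⟨rfl, hpre σ' τ' hp' hτ'⟩
    · intro σ hσ hlen
      match σ, hσ with
      | [], _ => left; show [false] ∈ _; rw [show ([false] : List Bool) = false :: [] from rfl, mem_emb_lf]; simp
      | b :: σ', hσ =>
        rw [mem_emb_lf] at hσ
        obtain ⟨rfl, hσ'⟩ := hσ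
        have hlen' : σ'.length < n := by simp at hlen; omega
        rcases hde σ' hσ' hlen' with h | h
        · left; show (false :: σ') ++ [false] ∈ _
          rw [List.cons_append, mem_emb_lf]; exact ⟨rfl, h⟩
        · right; show (false :: σ') ++ [true] ∈ _
          rw [List.cons_append, mem_emb_lf]; exact ⟨rfl, h⟩
  | _, @BT.rt n t => by
    obtain ⟨-, -, hpre, hde⟩ := finTree_emb t
    refine ⟨⟨[], by simp⟩, mem_emb_length _, ?_, ?_⟩
    · intro σ τ hp hτ
      match τ, hτ with
      | [], _ => rw [List.prefix_nil.mp hp]; simp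
      | b :: τ', hτ =>
        rw [mem_emb_rt] at hτ
        obtain ⟨rfl, hτ'⟩ := hτ
        match σ, hp with
        | [], _ => simp
        | c :: σ', hp =>
          obtain ⟨rfl, hp'⟩ := List.cons_prefix_cons.mp hp
          rw [mem_emb_rt]
          exact ⟨rfl, hpre σ' τ' hp' hτ'⟩
    · intro σ hσ hlen
      match σ, hσ with
      | [], _ => right; show [true] ∈ _; rw [show ([true] : List Bool) = true :: [] from rfl, mem_emb_rt]; simp
      | b :: σ', hσ =>
        rw [mem_emb_rt] at hσ
        obtain ⟨rfl, hσ'⟩ := hσ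
        have hlen' : σ'.length < n := by simp at hlen; omega
        rcases hde σ' hσ' hlen' with h | h
        · left; show (true :: σ') ++ [false] ∈ _
          rw [List.cons_append, mem_emb_rt]; exact ⟨rfl, h⟩
        · right; show (true :: σ') ++ [true] ∈ _
          rw [List.cons_append, mem_emb_rt]; exact ⟨rfl, h⟩
  | _, @BT.bo n s t => by
    obtain ⟨-, -, hpres, hdes⟩ := finTree_emb s
    obtain ⟨-, -, hpret, hdet⟩ := finTree_emb t
    refine ⟨⟨[], by simp⟩, mem_emb_length _, ?_, ?_⟩
    · intro σ τ hp hτ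
      match τ, hτ with
      | [], _ => rw [List.prefix_nil.mp hp]; simp
      | b :: τ', hτ =>
        rw [mem_emb_bo] at hτ
        match σ, hp with
        | [], _ => simp
        | c :: σ', hp =>
          obtain ⟨rfl, hp'⟩ := List.cons_prefix_cons.mp hp
          rw [mem_emb_bo]
          rcases hτ with ⟨rfl, hτ'⟩ | ⟨rfl, hτ'⟩
          · exact Or.inl ⟨rfl, hpres σ' τ' hp' hτ'⟩
          · exact Or.inr ⟨rfl, hpret σ' τ' hp' hτ'⟩
    · intro σ hσ hlen
      match σ, hσ with
      | [], _ =>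
        left; show [false] ∈ _
        rw [show ([false] : List Bool) = false :: [] from rfl, mem_emb_bo]; simp
      | b :: σ', hσ =>
        rw [mem_emb_bo] at hσ
        have hlen' : σ'.length < n := by simp at hlen; omega
        rcases hσ with ⟨rfl, hσ'⟩ | ⟨rfl, hσ'⟩
        · rcases hdes σ' hσ' hlen' with h | h
          · left; show (false :: σ') ++ [false] ∈ _
            rw [List.cons_append, mem_emb_bo]; exact Or.inl ⟨rfl, h⟩
          · right; show (false :: σ') ++ [true] ∈ _
            rw [List.cons_append, mem_emb_bo]; exact Or.inl ⟨rfl, h⟩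
        · rcases hdet σ' hσ' hlen' with h | h
          · left; show (true :: σ') ++ [false] ∈ _
            rw [List.cons_append, mem_emb_bo]; exact Or.inr ⟨rfl, h⟩
          · right; show (true :: σ') ++ [true] ∈ _
            rw [List.cons_append, mem_emb_bo]; exact Or.inr ⟨rfl, h⟩


section params
variable (b0 b1 : ℝ)

lemma prod_emb : ∀ {n : ℕ} (t : BT n),
    ∏ σ ∈ (emb t).filter (fun σ => σ.length < n), asymWeight b0 b1 (emb t) σ = wt b0 b1 t
  | _, .leaf => by
    rw [show (emb BT.leaf : Finset (List Bool)) = {[]} from rfl]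
    rw [Finset.filter_singleton]
    simp [wt]
  | _, @BT.lf n t => by
    have key := prod_emb (n := n) t
    show ∏ σ ∈ (insert [] ((emb t).image (List.cons false))).filter
        (fun σ => σ.length < n+1), asymWeight b0 b1 (emb (.lf t)) σ = b0 * wt b0 b1 t
    rw [Finset.filter_insert, if_pos (by simp)]
    rw [Finset.filter_image]
    have hnil : ([] : List Bool) ∉ ((emb t).filter
        (fun a => (List.cons false a).length < n+1)).image (List.cons false) := by
      simp
    rw [Finset.prod_insert hnil]
    have hroot : asymWeight b0 b1 (emb (.lf t)) [] = b0 := by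
      have h1 : ([] : List Bool) ++ [false] ∈ emb (.lf t) := by
        simp [List.nil_append]
      have h2 : ([] : List Bool) ++ [true] ∉ emb (.lf t) := by
        simp [List.nil_append]
      simp [asymWeight, h1, h2]
    rw [hroot]
    rw [Finset.prod_image (by intro x _ y _ h; exact (List.cons.injEq _ _ _ _ ▸ h).2)]
    congr 1
    rw [show ((emb t).filter (fun a => (List.cons false a).length < n+1))
        = (emb t).filter (fun a => a.length < n) by
      apply Finset.filter_congr; intro x _; simp]
    rw [← key]
    apply Finset.prod_congr rfl
    intro σ hσ
    have hf : (false :: σ) ++ [false] ∈ emb (.lf t) ↔ σ ++ [false] ∈ emb t := by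
      rw [List.cons_append, mem_emb_lf]; simp
    have ht : (false :: σ) ++ [true] ∈ emb (.lf t) ↔ σ ++ [true] ∈ emb t := by
      rw [List.cons_append, mem_emb_lf]; simp
    simp only [asymWeight, hf, ht]
  | _, @BT.rt n t => by
    have key := prod_emb (n := n) t
    show ∏ σ ∈ (insert [] ((emb t).image (List.cons true))).filter
        (fun σ => σ.length < n+1), asymWeight b0 b1 (emb (.rt t)) σ = b1 * wt b0 b1 t
    rw [Finset.filter_insert, if_pos (by simp)]
    rw [Finset.filter_image]
    have hnil : ([] : List Bool) ∉ ((emb t).filter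
        (fun a => (List.cons true a).length < n+1)).image (List.cons true) := by
      simp
    rw [Finset.prod_insert hnil]
    have hroot : asymWeight b0 b1 (emb (.rt t)) [] = b1 := by
      have h1 : ([] : List Bool) ++ [true] ∈ emb (.rt t) := by
        simp [List.nil_append]
      have h2 : ([] : List Bool) ++ [false] ∉ emb (.rt t) := by
        simp [List.nil_append]
      simp [asymWeight, h1, h2]
    rw [hroot]
    rw [Finset.prod_image (by intro x _ y _ h; exact (List.cons.injEq _ _ _ _ ▸ h).2)]
    congr 1
    rw [show ((emb t).filter (fun a => (List.cons true a).length < n+1))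
        = (emb t).filter (fun a => a.length < n) by
      apply Finset.filter_congr; intro x _; simp]
    rw [← key]
    apply Finset.prod_congr rfl
    intro σ hσ
    have hf : (true :: σ) ++ [false] ∈ emb (.rt t) ↔ σ ++ [false] ∈ emb t := by
      rw [List.cons_append, mem_emb_rt]; simp
    have ht : (true :: σ) ++ [true] ∈ emb (.rt t) ↔ σ ++ [true] ∈ emb t := by
      rw [List.cons_append, mem_emb_rt]; simp
    simp only [asymWeight, hf, ht]
  | _, @BT.bo n s t => by
    have keys := prod_emb (n := n) s
    have keyt := prod_emb (n := n) t
    show ∏ σ ∈ (insert [] (((emb s).image (List.cons false))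
          ∪ ((emb t).image (List.cons true)))).filter
        (fun σ => σ.length < n+1), asymWeight b0 b1 (emb (.bo s t)) σ
      = (1 - b0 - b1) * wt b0 b1 s * wt b0 b1 t
    rw [Finset.filter_insert, if_pos (by simp), Finset.filter_union,
      Finset.filter_image, Finset.filter_image]
    have hnil : ([] : List Bool) ∉
        ((emb s).filter (fun a => (List.cons false a).length < n+1)).image (List.cons false)
        ∪ ((emb t).filter (fun a => (List.cons true a).length < n+1)).image (List.cons true) := by
      simp
    rw [Finset.prod_insert hnil]
    have hroot : asymWeight b0 b1 (emb (.bo s t)) [] = 1 - b0 - b1 := by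
      have h1 : ([] : List Bool) ++ [false] ∈ emb (.bo s t) := by
        simp [List.nil_append]
      have h2 : ([] : List Bool) ++ [true] ∈ emb (.bo s t) := by
        simp [List.nil_append]
      simp [asymWeight, h1, h2]
    rw [hroot]
    have hdisj : Disjoint
        (((emb s).filter (fun a => (List.cons false a).length < n+1)).image (List.cons false))
        (((emb t).filter (fun a => (List.cons true a).length < n+1)).image (List.cons true)) := by
      rw [Finset.disjoint_left]
      intro σ h1 h2
      simp only [Finset.mem_image] at h1 h2
      obtain ⟨x, -, hx⟩ := h1
      obtain ⟨y, -, hy⟩ := h2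
      rw [← hx] at hy
      exact absurd (List.cons.injEq _ _ _ _ ▸ hy).1 (by simp)
    rw [Finset.prod_union hdisj]
    rw [Finset.prod_image (by intro x _ y _ h; exact (List.cons.injEq _ _ _ _ ▸ h).2),
      Finset.prod_image (by intro x _ y _ h; exact (List.cons.injEq _ _ _ _ ▸ h).2)]
    have e1 : ∏ x ∈ (emb s).filter (fun a => (List.cons false a).length < n+1),
        asymWeight b0 b1 (emb (.bo s t)) (false :: x) = wt b0 b1 s := by
      rw [show ((emb s).filter (fun a => (List.cons false a).length < n+1))
          = (emb s).filter (fun a => a.length < n) by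
        apply Finset.filter_congr; intro x _; simp]
      rw [← keys]
      apply Finset.prod_congr rfl
      intro σ hσ
      have hf : (false :: σ) ++ [false] ∈ emb (.bo s t) ↔ σ ++ [false] ∈ emb s := by
        rw [List.cons_append, mem_emb_bo]; simp
      have ht : (false :: σ) ++ [true] ∈ emb (.bo s t) ↔ σ ++ [true] ∈ emb s := by
        rw [List.cons_append, mem_emb_bo]; simp
      simp only [asymWeight, hf, ht]
    have e2 : ∏ x ∈ (emb t).filter (fun a => (List.cons true a).length < n+1),
        asymWeight b0 b1 (emb (.bo s t)) (true :: x) = wt b0 b1 t := by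
      rw [show ((emb t).filter (fun a => (List.cons true a).length < n+1))
          = (emb t).filter (fun a => a.length < n) by
        apply Finset.filter_congr; intro x _; simp]
      rw [← keyt]
      apply Finset.prod_congr rfl
      intro σ hσ
      have hf : (true :: σ) ++ [false] ∈ emb (.bo s t) ↔ σ ++ [false] ∈ emb t := by
        rw [List.cons_append, mem_emb_bo]; simp
      have ht : (true :: σ) ++ [true] ∈ emb (.bo s t) ↔ σ ++ [true] ∈ emb t := by
        rw [List.cons_append, mem_emb_bo]; simp
      simp only [asymWeight, hf, ht]
    rw [e1, e2, mul_assoc]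

end params


lemma emb_injective : ∀ {n : ℕ} (s t : BT n), emb s = emb t → s = t
  | _, .leaf, .leaf, _ => rfl
  | _, .lf a, .lf b, h => by
    have : emb a = emb b := by
      ext σ
      have h1 : σ ∈ emb a ↔ (false :: σ) ∈ emb (BT.lf a) := by rw [mem_emb_lf]; simp
      have h2 : σ ∈ emb b ↔ (false :: σ) ∈ emb (BT.lf b) := by rw [mem_emb_lf]; simp
      rw [h1, h2, h]
    rw [emb_injective a b this]
  | _, .lf a, .rt b, h => by
    exfalso
    have h1 : (false :: []) ∈ emb (BT.lf a) := by rw [mem_emb_lf]; simp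
    rw [h, mem_emb_rt] at h1
    simp at h1
  | _, .lf a, .bo b c, h => by
    exfalso
    have h1 : (true :: []) ∈ emb (BT.bo b c) := by rw [mem_emb_bo]; simp
    rw [← h, mem_emb_lf] at h1
    simp at h1
  | _, .rt a, .lf b, h => by
    exfalso
    have h1 : (true :: []) ∈ emb (BT.rt a) := by rw [mem_emb_rt]; simp
    rw [h, mem_emb_lf] at h1
    simp at h1
  | _, .rt a, .rt b, h => by
    have : emb a = emb b := by
      ext σ
      have h1 : σ ∈ emb a ↔ (true :: σ) ∈ emb (BT.rt a) := by rw [mem_emb_rt]; simp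
      have h2 : σ ∈ emb b ↔ (true :: σ) ∈ emb (BT.rt b) := by rw [mem_emb_rt]; simp
      rw [h1, h2, h]
    rw [emb_injective a b this]
  | _, .rt a, .bo b c, h => by
    exfalso
    have h1 : (false :: []) ∈ emb (BT.bo b c) := by rw [mem_emb_bo]; simp
    rw [← h, mem_emb_rt] at h1
    simp at h1
  | _, .bo a a', .lf b, h => by
    exfalso
    have h1 : (true :: []) ∈ emb (BT.bo a a') := by rw [mem_emb_bo]; simp
    rw [h, mem_emb_lf] at h1
    simp at h1
  | _, .bo a a', .rt b, h => by
    exfalso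
    have h1 : (false :: []) ∈ emb (BT.bo a a') := by rw [mem_emb_bo]; simp
    rw [h, mem_emb_rt] at h1
    simp at h1
  | _, .bo a a', .bo b b', h => by
    have e1 : emb a = emb b := by
      ext σ
      have h1 : σ ∈ emb a ↔ (false :: σ) ∈ emb (BT.bo a a') := by rw [mem_emb_bo]; simp
      have h2 : σ ∈ emb b ↔ (false :: σ) ∈ emb (BT.bo b b') := by rw [mem_emb_bo]; simp
      rw [h1, h2, h]
    have e2 : emb a' = emb b' := by
      ext σ
      have h1 : σ ∈ emb a' ↔ (true :: σ) ∈ emb (BT.bo a a') := by rw [mem_emb_bo]; simp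
      have h2 : σ ∈ emb b' ↔ (true :: σ) ∈ emb (BT.bo b b') := by rw [mem_emb_bo]; simp
      rw [h1, h2, h]
    rw [emb_injective a b e1, emb_injective a' b' e2]

def child (b : Bool) (A : Finset (List Bool)) : Finset (List Bool) :=
  (A.filter (fun σ => σ.head? = some b)).image List.tail

lemma mem_child {b : Bool} {A : Finset (List Bool)} {σ : List Bool} :
    σ ∈ child b A ↔ (b :: σ) ∈ A := by
  simp only [child, Finset.mem_image, Finset.mem_filter]
  constructor
  · rintro ⟨τ, ⟨hτA, hh⟩, ht⟩
    match τ, hh, ht with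
    | [], hh, _ => simp at hh
    | c :: l, hh, ht =>
      have hc : c = b := by simpa using hh
      have hl : l = σ := by simpa using ht
      rw [← hc, ← hl]; exact hτA
  · intro h
    exact ⟨b :: σ, ⟨h, rfl⟩, rfl⟩

lemma nil_mem_of_finTree {n : ℕ} {A : Finset (List Bool)} (hA : FinTree n A) : [] ∈ A := by
  obtain ⟨⟨τ, hτ⟩, -, hpre, -⟩ := hA
  exact hpre [] τ (List.nil_prefix) hτ

lemma finTree_child {n : ℕ} {A : Finset (List Bool)} {b : Bool}
    (hA : FinTree (n+1) A) (hb : (b :: []) ∈ A) : FinTree n (child b A) := by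
  obtain ⟨-, hlen, hpre, hde⟩ := hA
  refine ⟨⟨[], mem_child.mpr hb⟩, ?_, ?_, ?_⟩
  · intro σ hσ
    have := hlen (b :: σ) (mem_child.mp hσ)
    simpa using this
  · intro σ τ hp hτ
    rw [mem_child] at hτ ⊢
    exact hpre (b :: σ) (b :: τ) (List.cons_prefix_cons.mpr ⟨rfl, hp⟩) hτ
  · intro σ hσ hslen
    rw [mem_child] at hσ
    have hl : (b :: σ).length < n + 1 := by simpa using hslen
    rcases hde (b :: σ) hσ hl with h | h
    · left; rw [mem_child]; exact h
    · right; rw [mem_child]; exact h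

lemma emb_surj : ∀ (n : ℕ) (A : Finset (List Bool)), FinTree n A → ∃ t : BT n, emb t = A := by
  intro n
  induction n with
  | zero =>
    intro A hA
    refine ⟨.leaf, ?_⟩
    have hnil := nil_mem_of_finTree hA
    obtain ⟨-, hlen, -, -⟩ := hA
    apply Finset.ext
    intro σ
    simp only [emb, Finset.mem_singleton]
    constructor
    · rintro rfl; exact hnil
    · intro h
      have := hlen σ h
      exact List.length_eq_zero_iff.mp (Nat.le_zero.mp this)
  | succ n ih =>
    intro A hA
    have hnil := nil_mem_of_finTree hA
    have hroot : ([false] : List Bool) ∈ A ∨ ([true] : List Bool) ∈ A := by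
      have := hA.2.2.2 [] hnil (by simp)
      simpa using this
    by_cases hf : ([false] : List Bool) ∈ A
    · by_cases ht : ([true] : List Bool) ∈ A
      · obtain ⟨s, hs⟩ := ih (child false A) (finTree_child hA hf)
        obtain ⟨t, htt⟩ := ih (child true A) (finTree_child hA ht)
        refine ⟨.bo s t, ?_⟩
        apply Finset.ext
        intro σ
        match σ with
        | [] => simpa using hnil
        | b :: σ' =>
          rw [mem_emb_bo, hs, htt, mem_child, mem_child]
          cases b <;> simp
      · obtain ⟨s, hs⟩ := ih (child false A) (finTree_child hA hf)
        refine ⟨.lf s, ?_⟩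
        apply Finset.ext
        intro σ
        match σ with
        | [] => simpa using hnil
        | b :: σ' =>
          rw [mem_emb_lf, hs, mem_child]
          cases b
          · simp
          · simp only [Bool.true_eq_false, false_and, false_iff]
            intro hmem
            exact ht (hA.2.2.1 [true] (true :: σ') (List.cons_prefix_cons.mpr ⟨rfl, List.nil_prefix⟩) hmem)
    · rcases hroot with h | ht'
      · exact absurd h hf
      obtain ⟨t, htt⟩ := ih (child true A) (finTree_child hA ht')
      refine ⟨.rt t, ?_⟩
      apply Finset.ext
      intro σ
      match σ with
      | [] => simpa using hnil
      | b :: σ' =>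
        rw [mem_emb_rt, htt, mem_child]
        cases b
        · simp only [Bool.false_eq_true, false_and, false_iff]
          intro hmem
          exact hf (hA.2.2.1 [false] (false :: σ') (List.cons_prefix_cons.mpr ⟨rfl, List.nil_prefix⟩) hmem)
        · simp

lemma sv_iff : ∀ {n : ℕ} (s t : BT n),
    sv s t = true ↔ ∃ σ : List Bool, σ.length = n ∧ σ ∈ emb s ∧ σ ∈ emb t
  | _, .leaf, .leaf => by
    constructor
    · intro _; exact ⟨[], rfl, by simp, by simp⟩
    · intro _; rfl
  | _, @BT.lf n a, .lf b => by
    rw [show sv (BT.lf a) (BT.lf b) = sv a b from rfl, sv_iff a b]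
    constructor
    · rintro ⟨σ, hlen, h1, h2⟩
      exact ⟨false :: σ, by simp [hlen], by rw [mem_emb_lf]; simp [h1],
        by rw [mem_emb_lf]; simp [h2]⟩
    · rintro ⟨σ, hlen, h1, h2⟩
      match σ, hlen with
      | c :: σ', hlen =>
        rw [mem_emb_lf] at h1 h2
        exact ⟨σ', by simpa using hlen, h1.2, h2.2⟩
  | _, @BT.lf n a, .rt b => by
    rw [show sv (BT.lf a) (BT.rt b) = false from rfl]
    simp only [Bool.false_eq_true, false_iff]
    rintro ⟨σ, hlen, h1, h2⟩
    match σ with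
    | c :: σ' =>
      rw [mem_emb_lf] at h1
      rw [mem_emb_rt] at h2
      rw [h1.1] at h2
      simp at h2
  | _, @BT.lf n a, .bo b b' => by
    rw [show sv (BT.lf a) (BT.bo b b') = sv a b from rfl, sv_iff a b]
    constructor
    · rintro ⟨σ, hlen, h1, h2⟩
      exact ⟨false :: σ, by simp [hlen], by rw [mem_emb_lf]; simp [h1],
        by rw [mem_emb_bo]; simp [h2]⟩
    · rintro ⟨σ, hlen, h1, h2⟩
      match σ, hlen with
      | c :: σ', hlen =>
        rw [mem_emb_lf] at h1
        rw [mem_emb_bo] at h2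
        obtain ⟨rfl, h1⟩ := h1
        rcases h2 with ⟨-, h2⟩ | ⟨hc, -⟩
        · exact ⟨σ', by simpa using hlen, h1, h2⟩
        · simp at hc
  | _, @BT.rt n a, .lf b => by
    rw [show sv (BT.rt a) (BT.lf b) = false from rfl]
    simp only [Bool.false_eq_true, false_iff]
    rintro ⟨σ, hlen, h1, h2⟩
    match σ with
    | c :: σ' =>
      rw [mem_emb_rt] at h1
      rw [mem_emb_lf] at h2
      rw [h1.1] at h2
      simp at h2
  | _, @BT.rt n a, .rt b => by
    rw [show sv (BT.rt a) (BT.rt b) = sv a b from rfl, sv_iff a b]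
    constructor
    · rintro ⟨σ, hlen, h1, h2⟩
      exact ⟨true :: σ, by simp [hlen], by rw [mem_emb_rt]; simp [h1],
        by rw [mem_emb_rt]; simp [h2]⟩
    · rintro ⟨σ, hlen, h1, h2⟩
      match σ, hlen with
      | c :: σ', hlen =>
        rw [mem_emb_rt] at h1 h2
        exact ⟨σ', by simpa using hlen, h1.2, h2.2⟩
  | _, @BT.rt n a, .bo b b' => by
    rw [show sv (BT.rt a) (BT.bo b b') = sv a b' from rfl, sv_iff a b']
    constructor
    · rintro ⟨σ, hlen, h1, h2⟩
      exact ⟨true :: σ, by simp [hlen], by rw [mem_emb_rt]; simp [h1],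
        by rw [mem_emb_bo]; simp [h2]⟩
    · rintro ⟨σ, hlen, h1, h2⟩
      match σ, hlen with
      | c :: σ', hlen =>
        rw [mem_emb_rt] at h1
        rw [mem_emb_bo] at h2
        obtain ⟨rfl, h1⟩ := h1
        rcases h2 with ⟨hc, -⟩ | ⟨-, h2⟩
        · simp at hc
        · exact ⟨σ', by simpa using hlen, h1, h2⟩
  | _, @BT.bo n a a', .lf b => by
    rw [show sv (BT.bo a a') (BT.lf b) = sv a b from rfl, sv_iff a b]
    constructor
    · rintro ⟨σ, hlen, h1, h2⟩
      exact ⟨false :: σ, by simp [hlen], by rw [mem_emb_bo]; simp [h1],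
        by rw [mem_emb_lf]; simp [h2]⟩
    · rintro ⟨σ, hlen, h1, h2⟩
      match σ, hlen with
      | c :: σ', hlen =>
        rw [mem_emb_bo] at h1
        rw [mem_emb_lf] at h2
        obtain ⟨rfl, h2⟩ := h2
        rcases h1 with ⟨-, h1⟩ | ⟨hc, -⟩
        · exact ⟨σ', by simpa using hlen, h1, h2⟩
        · simp at hc
  | _, @BT.bo n a a', .rt b => by
    rw [show sv (BT.bo a a') (BT.rt b) = sv a' b from rfl, sv_iff a' b]
    constructor
    · rintro ⟨σ, hlen, h1, h2⟩
      exact ⟨true :: σ, by simp [hlen], by rw [mem_emb_bo]; simp [h1],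
        by rw [mem_emb_rt]; simp [h2]⟩
    · rintro ⟨σ, hlen, h1, h2⟩
      match σ, hlen with
      | c :: σ', hlen =>
        rw [mem_emb_bo] at h1
        rw [mem_emb_rt] at h2
        obtain ⟨rfl, h2⟩ := h2
        rcases h1 with ⟨hc, -⟩ | ⟨-, h1⟩
        · simp at hc
        · exact ⟨σ', by simpa using hlen, h1, h2⟩
  | _, @BT.bo n a a', .bo b b' => by
    rw [show sv (BT.bo a a') (BT.bo b b') = (sv a b || sv a' b') from rfl,
      Bool.or_eq_true]
    constructor
    · rintro (h | h)
      · obtain ⟨σ, hlen, h1, h2⟩ := (sv_iff a b).mp h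
        exact ⟨false :: σ, by simp [hlen], by rw [mem_emb_bo]; simp [h1],
          by rw [mem_emb_bo]; simp [h2]⟩
      · obtain ⟨σ, hlen, h1, h2⟩ := (sv_iff a' b').mp h
        exact ⟨true :: σ, by simp [hlen], by rw [mem_emb_bo]; simp [h1],
          by rw [mem_emb_bo]; simp [h2]⟩
    · rintro ⟨σ, hlen, h1, h2⟩
      match σ, hlen with
      | c :: σ', hlen =>
        rw [mem_emb_bo] at h1 h2
        rcases h1 with ⟨rfl, h1⟩ | ⟨rfl, h1⟩
        · rcases h2 with ⟨-, h2⟩ | ⟨hc, -⟩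
          · exact Or.inl ((sv_iff a b).mpr ⟨σ', by simpa using hlen, h1, h2⟩)
          · simp at hc
        · rcases h2 with ⟨hc, -⟩ | ⟨-, h2⟩
          · simp at hc
          · exact Or.inr ((sv_iff a' b').mpr ⟨σ', by simpa using hlen, h1, h2⟩)


/-! ### cylinders and measurability -/

lemma cyl_nil : cyl [] = Set.univ := by
  ext x; simp [cyl]

lemma isOpen_cyl (σ : List Bool) : IsOpen (cyl σ) := by
  have : cyl σ = ⋂ i : Fin σ.length, (fun x : Cantor => x i) ⁻¹' {σ.get i} := by
    ext x; simp [cyl]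
  rw [this]
  exact isOpen_iInter_of_finite fun i =>
    (continuous_apply (i : ℕ)).isOpen_preimage _ (isOpen_discrete _)

lemma measurableSet_hit (σ : List Bool) :
    MeasurableSet {K : CC | (K.1 ∩ cyl σ).Nonempty} := by
  have hopen : IsOpen {K : CC | (K.1 ∩ cyl σ).Nonempty} :=
    TopologicalSpace.GenerateOpen.basic _ (Or.inl ⟨cyl σ, isOpen_cyl σ, rfl⟩)
  exact MeasurableSpace.measurableSet_generateFrom hopen

lemma measurableSet_UA (n : ℕ) (A : Finset (List Bool)) : MeasurableSet (UA n A) := by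
  have : UA n A = ⋂ σ : List Bool, ⋂ (_ : σ.length ≤ n),
      {K : CC | σ ∈ A ↔ (K.1 ∩ cyl σ).Nonempty} := by
    ext K; simp [UA]
  rw [this]
  refine MeasurableSet.iInter fun σ => MeasurableSet.iInter fun hσ => ?_
  by_cases hA : σ ∈ A
  · have : {K : CC | σ ∈ A ↔ (K.1 ∩ cyl σ).Nonempty}
        = {K : CC | (K.1 ∩ cyl σ).Nonempty} := by
      ext K; simp [hA]
    rw [this]; exact measurableSet_hit σ
  · have : {K : CC | σ ∈ A ↔ (K.1 ∩ cyl σ).Nonempty}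
        = {K : CC | (K.1 ∩ cyl σ).Nonempty}ᶜ := by
      ext K; simp [hA]
    rw [this]; exact (measurableSet_hit σ).compl

/-! ### the canonical tree of a closed set -/

def allLists : ℕ → Finset (List Bool)
  | 0 => {[]}
  | n+1 => allLists n ∪ (allLists n).image (List.cons false)
      ∪ (allLists n).image (List.cons true)

lemma mem_allLists : ∀ (n : ℕ) (σ : List Bool), σ ∈ allLists n ↔ σ.length ≤ n := by
  intro n
  induction n with
  | zero =>
    intro σ
    simp only [allLists, Finset.mem_singleton]
    constructor
    · rintro rfl; simp
    · intro h; exact List.length_eq_zero_iff.mp (Nat.le_zero.mp h)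
  | succ n ih =>
    intro σ
    simp only [allLists, Finset.mem_union, Finset.mem_image]
    constructor
    · rintro ((h | ⟨τ, hτ, rfl⟩) | ⟨τ, hτ, rfl⟩)
      · exact le_trans ((ih σ).mp h) (Nat.le_succ n)
      · simpa using (ih τ).mp hτ
      · simpa using (ih τ).mp hτ
    · intro h
      match σ with
      | [] => exact Or.inl (Or.inl ((ih []).mpr (by simp)))
      | false :: τ => exact Or.inl (Or.inr ⟨τ, (ih τ).mpr (by simpa using h), rfl⟩)
      | true :: τ => exact Or.inr ⟨τ, (ih τ).mpr (by simpa using h), rfl⟩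

noncomputable def treeOf (K : CC) (n : ℕ) : Finset (List Bool) :=
  @Finset.filter _ (fun σ => (K.1 ∩ cyl σ).Nonempty) (Classical.decPred _) (allLists n)

lemma mem_treeOf {K : CC} {n : ℕ} {σ : List Bool} :
    σ ∈ treeOf K n ↔ σ.length ≤ n ∧ (K.1 ∩ cyl σ).Nonempty := by
  classical
  simp [treeOf, Finset.mem_filter, mem_allLists]

lemma cyl_anti {σ τ : List Bool} (h : σ <+: τ) : cyl τ ⊆ cyl σ := by
  intro x hx i
  have hlt : (i : ℕ) < τ.length := lt_of_lt_of_le i.2 h.length_le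
  have h1 : x i = τ.get ⟨i, hlt⟩ := hx ⟨i, hlt⟩
  have h2 : σ.get i = τ.get ⟨i, hlt⟩ := by
    simpa [List.get_eq_getElem] using h.getElem i.2
  rw [h1, h2]

lemma mem_cyl_append {x : Cantor} {σ : List Bool} (hx : x ∈ cyl σ) :
    x ∈ cyl (σ ++ [x σ.length]) := by
  intro i
  have hlen : (σ ++ [x σ.length]).length = σ.length + 1 := by simp
  have hi : (i : ℕ) < σ.length + 1 := by rw [← hlen]; exact i.2
  rcases Nat.lt_or_ge (i : ℕ) σ.length with h | h
  · have h1 : (σ ++ [x σ.length]).get i = σ.get ⟨i, h⟩ := by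
      simp [List.get_eq_getElem, List.getElem_append_left h]
    rw [h1]
    exact hx ⟨i, h⟩
  · have heq : (i : ℕ) = σ.length := by omega
    have h1 : (σ ++ [x σ.length]).get i = x σ.length := by
      simp [List.get_eq_getElem, heq]
    rw [h1, heq]

lemma finTree_treeOf (K : CC) (n : ℕ) : FinTree n (treeOf K n) := by
  obtain ⟨⟨x0, hx0⟩, hcl⟩ := K.2
  refine ⟨⟨[], ?_⟩, fun σ h => (mem_treeOf.mp h).1, ?_, ?_⟩
  · rw [mem_treeOf]
    exact ⟨by simp, ⟨x0, hx0, by rw [cyl_nil]; trivial⟩⟩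
  · intro σ τ hp hτ
    rw [mem_treeOf] at hτ ⊢
    obtain ⟨hlen, x, hxK, hxc⟩ := hτ
    exact ⟨le_trans hp.length_le hlen, x, hxK, cyl_anti hp hxc⟩
  · intro σ hσ hlen
    rw [mem_treeOf] at hσ
    obtain ⟨-, x, hxK, hxc⟩ := hσ
    have hx' := mem_cyl_append hxc
    have hmem : σ ++ [x σ.length] ∈ treeOf K n := by
      rw [mem_treeOf]
      exact ⟨by simp; omega, x, hxK, hx'⟩
    cases hb : x σ.length with
    | false => left; rwa [hb] at hmem
    | true => right; rwa [hb] at hmem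

lemma mem_UA_treeOf (K : CC) (n : ℕ) : K ∈ UA n (treeOf K n) := by
  intro σ hσ
  rw [mem_treeOf]
  constructor
  · rintro ⟨-, h⟩; exact h
  · intro h; exact ⟨hσ, h⟩

/-- the word of length `n` read along `x` -/
def pref (x : Cantor) (n : ℕ) : List Bool := List.ofFn (fun i : Fin n => x i)

lemma pref_length (x : Cantor) (n : ℕ) : (pref x n).length = n := by simp [pref]

lemma mem_cyl_pref (x : Cantor) (n : ℕ) : x ∈ cyl (pref x n) := by
  intro i
  rw [List.get_eq_getElem]
  simp [pref]


/-! ### counting with the measure -/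

section meas
variable (b0 b1 : ℝ) (μ : Measure CC)

lemma measure_UA_emb (hμ : IsBranching b0 b1 μ) {n : ℕ} (t : BT n) :
    (μ (UA n (emb t))).toReal = wt b0 b1 t := by
  rw [hμ.2 n (emb t) (finTree_emb t), prod_emb]

lemma UA_pairwise_disjoint (n : ℕ) (S : Finset (BT n)) :
    Set.PairwiseDisjoint (S : Set (BT n)) (fun t => UA n (emb t)) := by
  intro t _ t' _ hne
  rw [Function.onFun, Set.disjoint_left]
  intro K hK hK'
  apply hne
  apply emb_injective
  apply Finset.ext
  intro σ
  by_cases hlen : σ.length ≤ n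
  · rw [hK σ hlen, hK' σ hlen]
  · constructor
    · intro h; exact absurd (mem_emb_length t σ h) hlen
    · intro h; exact absurd (mem_emb_length t' σ h) hlen

lemma measure_biUnion_UA (hμ : IsBranching b0 b1 μ) (n : ℕ) (S : Finset (BT n)) :
    (μ (⋃ t ∈ S, UA n (emb t))).toReal = ∑ t ∈ S, wt b0 b1 t := by
  haveI := hμ.1
  rw [measure_biUnion_finset (UA_pairwise_disjoint n S)
    (fun t _ => measurableSet_UA n (emb t))]
  rw [ENNReal.toReal_sum (fun t _ => measure_ne_top μ _)]
  exact Finset.sum_congr rfl fun t _ => measure_UA_emb b0 b1 μ hμ t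

/-- the total hitting weight against a fixed tree -/
noncomputable def Psi (n : ℕ) (u : BT n) : ℝ :=
  ∑ t ∈ Finset.univ.filter (fun t : BT n => sv t u), wt b0 b1 t

lemma Psi_nonneg (h0 : 0 < b0) (h1 : 0 < b1) (hs : b0 + b1 < 1) (n : ℕ) (u : BT n) :
    0 ≤ Psi b0 b1 n u :=
  Finset.sum_nonneg fun t _ => (wt_pos b0 b1 h0 h1 hs t).le

lemma sum_wt_Psi (n : ℕ) :
    ∑ u : BT n, wt b0 b1 u * Psi b0 b1 n u = qq b0 b1 n := by
  unfold Psi qq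
  have h1 : ∀ u : BT n, wt b0 b1 u * ∑ t ∈ Finset.univ.filter (fun t : BT n => sv t u), wt b0 b1 t
      = ∑ t : BT n, (if sv t u then wt b0 b1 u * wt b0 b1 t else 0) := by
    intro u
    rw [Finset.mul_sum, Finset.sum_filter]
  simp_rw [h1]
  rw [Finset.sum_comm]
  apply Finset.sum_congr rfl
  intro t _
  apply Finset.sum_congr rfl
  intro u _
  by_cases h : sv t u
  · simp only [h, if_true, chi_true, one_mul]; ring
  · simp [h, chi]

lemma cap_le_Psi (hμ : IsBranching b0 b1 μ) {n : ℕ} (R : CC) (u : BT n)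
    (hu : emb u = treeOf R n) :
    cap μ R.1 ≤ Psi b0 b1 n u := by
  haveI := hμ.1
  have hsub : {K : CC | (K.1 ∩ R.1).Nonempty}
      ⊆ ⋃ t ∈ Finset.univ.filter (fun t : BT n => sv t u), UA n (emb t) := by
    intro K hK
    obtain ⟨x, hxK, hxR⟩ := hK
    obtain ⟨tK, htK⟩ := emb_surj n (treeOf K n) (finTree_treeOf K n)
    have hKU : K ∈ UA n (emb tK) := by rw [htK]; exact mem_UA_treeOf K n
    have hσlen : (pref x n).length = n := pref_length x n
    have hσK : pref x n ∈ emb tK := by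
      rw [htK, mem_treeOf]
      exact ⟨le_of_eq hσlen, x, hxK, mem_cyl_pref x n⟩
    have hσR : pref x n ∈ emb u := by
      rw [hu, mem_treeOf]
      exact ⟨le_of_eq hσlen, x, hxR, mem_cyl_pref x n⟩
    have hsv : sv tK u = true := (sv_iff tK u).mpr ⟨pref x n, hσlen, hσK, hσR⟩
    exact Set.mem_biUnion (Finset.mem_filter.mpr ⟨Finset.mem_univ tK, hsv⟩) hKU
  unfold cap
  calc (μ {K : CC | (K.1 ∩ R.1).Nonempty}).toReal
      ≤ (μ (⋃ t ∈ Finset.univ.filter (fun t : BT n => sv t u), UA n (emb t))).toReal :=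
        ENNReal.toReal_mono (measure_ne_top μ _) (measure_mono hsub)
    _ = ∑ t ∈ Finset.univ.filter (fun t : BT n => sv t u), wt b0 b1 t :=
        measure_biUnion_UA b0 b1 μ hμ n _
    _ = Psi b0 b1 n u := rfl

lemma measure_cap_ge (hμ : IsBranching b0 b1 μ)
    (h0 : 0 < b0) (h1 : 0 < b1) (hs : b0 + b1 < 1)
    {ε : ℝ} (hε : 0 < ε) (n : ℕ) :
    (μ {R : CC | ε ≤ cap μ R.1}).toReal ≤ qq b0 b1 n / ε := by
  haveI := hμ.1
  set S : Finset (BT n) := Finset.univ.filter (fun u : BT n => ε ≤ Psi b0 b1 n u) with hS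
  have hsub : {R : CC | ε ≤ cap μ R.1} ⊆ ⋃ u ∈ S, UA n (emb u) := by
    intro R hR
    obtain ⟨u, hu⟩ := emb_surj n (treeOf R n) (finTree_treeOf R n)
    have hRU : R ∈ UA n (emb u) := by rw [hu]; exact mem_UA_treeOf R n
    have hcap : cap μ R.1 ≤ Psi b0 b1 n u := cap_le_Psi b0 b1 μ hμ R u hu
    have : u ∈ S := by
      rw [hS, Finset.mem_filter]
      exact ⟨Finset.mem_univ u, le_trans hR hcap⟩
    exact Set.mem_biUnion this hRU
  calc (μ {R : CC | ε ≤ cap μ R.1}).toReal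
      ≤ (μ (⋃ u ∈ S, UA n (emb u))).toReal :=
        ENNReal.toReal_mono (measure_ne_top μ _) (measure_mono hsub)
    _ = ∑ u ∈ S, wt b0 b1 u := measure_biUnion_UA b0 b1 μ hμ n S
    _ ≤ ∑ u ∈ S, wt b0 b1 u * (Psi b0 b1 n u / ε) := by
        apply Finset.sum_le_sum
        intro u hu
        rw [hS, Finset.mem_filter] at hu
        have h2 : 1 ≤ Psi b0 b1 n u / ε := (one_le_div hε).mpr hu.2
        calc wt b0 b1 u = wt b0 b1 u * 1 := (mul_one _).symm
          _ ≤ wt b0 b1 u * (Psi b0 b1 n u / ε) :=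
            mul_le_mul_of_nonneg_left h2 (wt_pos b0 b1 h0 h1 hs u).le
    _ ≤ ∑ u : BT n, wt b0 b1 u * (Psi b0 b1 n u / ε) := by
        apply Finset.sum_le_sum_of_subset_of_nonneg (Finset.subset_univ S)
        intro u _ _
        have := Psi_nonneg b0 b1 h0 h1 hs n u
        have := (wt_pos b0 b1 h0 h1 hs u).le
        positivity
    _ = qq b0 b1 n / ε := by
        rw [← sum_wt_Psi b0 b1 n, Finset.sum_div]
        apply Finset.sum_congr rfl
        intro u _
        ring

end meas

end Stmt2


open Stmt2 in
/-- for the `(b₀,b₁)`-branching measure with `b = (b₀+b₁)/2 ≥ 1 − √2/2` and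
`|b₀ − b₁| ≤ √(8b − 4b² − 2)`, almost every closed set has capacity zero. -/
theorem stmt_2 (b0 b1 : ℝ) (h0 : 0 < b0) (h1 : 0 < b1) (hsum : b0 + b1 < 1)
    (μ : Measure CC) (hμ : IsBranching b0 b1 μ)
    (hb : 1 - Real.sqrt 2 / 2 ≤ (b0 + b1) / 2)
    (hdiff : |b0 - b1| ≤
      Real.sqrt (8 * ((b0 + b1) / 2) - 4 * ((b0 + b1) / 2) ^ 2 - 2)) :
    ∀ᵐ R ∂μ, cap μ R.1 = 0 := by
  haveI := hμ.1
  have hs2 : Real.sqrt 2 ^ 2 = 2 := Real.sq_sqrt (by norm_num)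
  have hs2nn : (0:ℝ) ≤ Real.sqrt 2 := Real.sqrt_nonneg 2
  have hs2lb : (1.4 : ℝ) ≤ Real.sqrt 2 := by nlinarith
  have hble : (b0 + b1) / 2 < 1/2 := by linarith
  -- the discriminant is nonnegative
  have h1b : 1 - (b0 + b1)/2 ≤ Real.sqrt 2 / 2 := by linarith
  have h1b0 : (0:ℝ) ≤ 1 - (b0 + b1)/2 := by linarith
  have hsq : (1 - (b0 + b1)/2)^2 ≤ (Real.sqrt 2 / 2)^2 := pow_le_pow_left₀ h1b0 h1b 2
  have hhalf : (Real.sqrt 2 / 2)^2 = 1/2 := by rw [div_pow, hs2]; norm_num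
  have hX0 : 0 ≤ 8 * ((b0 + b1) / 2) - 4 * ((b0 + b1) / 2) ^ 2 - 2 := by nlinarith
  have hd2 : (b0 - b1)^2 ≤ 8 * ((b0 + b1) / 2) - 4 * ((b0 + b1) / 2) ^ 2 - 2 := by
    have h := Real.sq_sqrt hX0
    have habs : |b0 - b1|^2
        ≤ Real.sqrt (8 * ((b0 + b1) / 2) - 4 * ((b0 + b1) / 2) ^ 2 - 2)^2 :=
      pow_le_pow_left₀ (abs_nonneg _) hdiff 2
    rw [sq_abs, h] at habs
    exact habs
  have hm : (1-b0)^2 + (1-b1)^2 ≤ 1 := by nlinarith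
  have hc0 : 0 < 1 - b0 - b1 := by linarith
  have ha2 : (1-b0-b1)^2 ≤ 1/2 := by
    have hle : 1 - b0 - b1 ≤ Real.sqrt 2 - 1 := by linarith
    have := pow_le_pow_left₀ hc0.le hle 2
    nlinarith
  have ha : (0:ℝ) < (1-b0-b1)^2 := by positivity
  have hbound := qq_mul_bound b0 b1 h0 h1 hsum hm ha2
  set a : ℝ := (1-b0-b1)^2 with hadef
  -- each superlevel set of the capacity is null
  have hkey : ∀ ε : ℝ, 0 < ε → μ {R : CC | ε ≤ cap μ R.1} = 0 := by
    intro ε hε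
    have hfin : μ {R : CC | ε ≤ cap μ R.1} ≠ ⊤ := measure_ne_top μ _
    have hto : (μ {R : CC | ε ≤ cap μ R.1}).toReal = 0 := by
      by_contra hne
      have hpos : 0 < (μ {R : CC | ε ≤ cap μ R.1}).toReal :=
        lt_of_le_of_ne ENNReal.toReal_nonneg (Ne.symm hne)
      set v : ℝ := (μ {R : CC | ε ≤ cap μ R.1}).toReal with hv
      obtain ⟨n, hn⟩ := exists_nat_gt ((1/(ε*v)) / a)
      have hεv : 0 < ε * v := mul_pos hε hpos
      have hn' : 1/(ε*v) < (n:ℝ) * a := by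
        rw [div_lt_iff₀ ha] at hn
        linarith
      have hden : (0:ℝ) < a * n + 1 := by positivity
      have hq1 : qq b0 b1 n ≤ 1 / (a * n + 1) := by
        rw [le_div_iff₀ hden]
        exact hbound n
      have hq2 : 1 / (a * n + 1) < ε * v := by
        rw [div_lt_iff₀ hden]
        have h3 : (1:ℝ) < (n * a) * (ε * v) := by
          calc (1:ℝ) = (1/(ε*v)) * (ε*v) := by field_simp
            _ < (n * a) * (ε * v) := mul_lt_mul_of_pos_right hn' hεv
        have h4 : ε*v*(a*(n:ℝ)+1) = ((n:ℝ)*a)*(ε*v) + ε*v := by ring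
        linarith
      have hcontr : v ≤ qq b0 b1 n / ε :=
        measure_cap_ge b0 b1 μ hμ h0 h1 hsum hε n
      have : qq b0 b1 n / ε < v := by
        rw [div_lt_iff₀ hε]
        calc qq b0 b1 n ≤ 1 / (a * n + 1) := hq1
          _ < ε * v := hq2
          _ = v * ε := by ring
      linarith
    rcases (ENNReal.toReal_eq_zero_iff _).mp hto with h | h
    · exact h
    · exact absurd h hfin
  rw [ae_iff]
  have hsub : {R : CC | ¬ cap μ R.1 = 0}
      ⊆ ⋃ k : ℕ, {R : CC | 1/((k:ℝ)+1) ≤ cap μ R.1} := by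
    intro R hR
    have hnn : 0 ≤ cap μ R.1 := ENNReal.toReal_nonneg
    have hpos : 0 < cap μ R.1 := lt_of_le_of_ne hnn (Ne.symm hR)
    obtain ⟨k, hk⟩ := exists_nat_one_div_lt hpos
    exact Set.mem_iUnion.mpr ⟨k, hk.le⟩
  refine le_antisymm ?_ zero_le
  calc μ {R : CC | ¬ cap μ R.1 = 0}
      ≤ μ (⋃ k : ℕ, {R : CC | 1/((k:ℝ)+1) ≤ cap μ R.1}) := measure_mono hsub
    _ ≤ ∑' k : ℕ, μ {R : CC | 1/((k:ℝ)+1) ≤ cap μ R.1} := measure_iUnion_le _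
    _ = 0 := by
        have hz : ∀ k : ℕ, μ {R : CC | 1/((k:ℝ)+1) ≤ cap μ R.1} = 0 :=
          fun k => hkey _ (by positivity)
        exact ENNReal.tsum_eq_zero.mpr hz
end

section
/- Let b₀, b₁ > 0 with b₀ + b₁ < 1, set b = (b₀ + b₁)/2 and b̂ = 1 − √2/2. Let μ* be the (b₀,b₁)-branching measure on C and T the associated capacity. If either b < b̂, or b ≥ b̂ and |b₀ − b₁| > √(8b − 4b² − 2), then μ*({R ∈ C : T(R) > 0}) > 0. -/
open Set MeasureTheory Topology Filter

namespace Stmt3A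

/-- all binary lists of length exactly n -/
def LFin : ℕ → Finset (List Bool)
  | 0 => {[]}
  | n+1 => (LFin n).image (List.cons false) ∪ (LFin n).image (List.cons true)

lemma mem_LFin {n : ℕ} {σ : List Bool} : σ ∈ LFin n ↔ σ.length = n := by
  induction n generalizing σ with
  | zero => cases σ <;> simp [LFin]
  | succ n ih =>
    cases σ with
    | nil => simp [LFin]
    | cons a τ =>
      cases a <;> simp [LFin, ih]

def cons0 (A : Finset (List Bool)) : Finset (List Bool) := insert [] (A.image (List.cons false))
def cons1 (A : Finset (List Bool)) : Finset (List Bool) := insert [] (A.image (List.cons true))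
def cons01 (A B : Finset (List Bool)) : Finset (List Bool) :=
  insert [] (A.image (List.cons false) ∪ B.image (List.cons true))

lemma mem_cons0 {A : Finset (List Bool)} {z : List Bool} :
    z ∈ cons0 A ↔ z = [] ∨ ∃ σ ∈ A, z = false :: σ := by
  simp [cons0, eq_comm]

lemma mem_cons1 {A : Finset (List Bool)} {z : List Bool} :
    z ∈ cons1 A ↔ z = [] ∨ ∃ σ ∈ A, z = true :: σ := by
  simp [cons1, eq_comm]

lemma mem_cons01 {A B : Finset (List Bool)} {z : List Bool} :
    z ∈ cons01 A B ↔ z = [] ∨ (∃ σ ∈ A, z = false :: σ) ∨ (∃ σ ∈ B, z = true :: σ) := by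
  simp [cons01, eq_comm]

def Trees : ℕ → Finset (Finset (List Bool))
  | 0 => {{([] : List Bool)}}
  | n+1 => ((Trees n).image cons0 ∪ (Trees n).image cons1) ∪
      ((Trees n) ×ˢ (Trees n)).image (fun p => cons01 p.1 p.2)

lemma nil_mem_finTree {n : ℕ} {A : Finset (List Bool)} (h : FinTree n A) : [] ∈ A := by
  rcases h.1 with ⟨w, hw⟩
  exact h.2.2.1 [] w w.nil_prefix hw

lemma finTree_cons0 {n : ℕ} {A : Finset (List Bool)} (h : FinTree n A) :
    FinTree (n+1) (cons0 A) := by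
  have hnil : [] ∈ A := nil_mem_finTree h
  refine ⟨⟨[], mem_cons0.2 (Or.inl rfl)⟩, ?_, ?_, ?_⟩
  · intro z hz
    rcases mem_cons0.1 hz with rfl | ⟨σ, hσ, rfl⟩
    · simp
    · simpa using Nat.succ_le_succ (h.2.1 σ hσ)
  · intro σ τ hp hτ
    rcases mem_cons0.1 hτ with rfl | ⟨τ', hτ', rfl⟩
    · rw [List.prefix_nil.1 hp]; exact mem_cons0.2 (Or.inl rfl)
    · cases σ with
      | nil => exact mem_cons0.2 (Or.inl rfl)
      | cons a σ' =>
        rcases List.cons_prefix_cons.1 hp with ⟨rfl, hp'⟩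
        exact mem_cons0.2 (Or.inr ⟨σ', h.2.2.1 σ' τ' hp' hτ', rfl⟩)
  · intro z hz hlen
    rcases mem_cons0.1 hz with rfl | ⟨σ, hσ, rfl⟩
    · exact Or.inl (mem_cons0.2 (Or.inr ⟨[], hnil, rfl⟩))
    · have hlen' : σ.length < n := by simpa using hlen
      rcases h.2.2.2 σ hσ hlen' with hx | hx
      · exact Or.inl (by rw [List.cons_append]; exact mem_cons0.2 (Or.inr ⟨σ ++ [false], hx, rfl⟩))
      · exact Or.inr (by rw [List.cons_append]; exact mem_cons0.2 (Or.inr ⟨σ ++ [true], hx, rfl⟩))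

lemma finTree_cons1 {n : ℕ} {A : Finset (List Bool)} (h : FinTree n A) :
    FinTree (n+1) (cons1 A) := by
  have hnil : [] ∈ A := nil_mem_finTree h
  refine ⟨⟨[], mem_cons1.2 (Or.inl rfl)⟩, ?_, ?_, ?_⟩
  · intro z hz
    rcases mem_cons1.1 hz with rfl | ⟨σ, hσ, rfl⟩
    · simp
    · simpa using Nat.succ_le_succ (h.2.1 σ hσ)
  · intro σ τ hp hτ
    rcases mem_cons1.1 hτ with rfl | ⟨τ', hτ', rfl⟩
    · rw [List.prefix_nil.1 hp]; exact mem_cons1.2 (Or.inl rfl)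
    · cases σ with
      | nil => exact mem_cons1.2 (Or.inl rfl)
      | cons a σ' =>
        rcases List.cons_prefix_cons.1 hp with ⟨rfl, hp'⟩
        exact mem_cons1.2 (Or.inr ⟨σ', h.2.2.1 σ' τ' hp' hτ', rfl⟩)
  · intro z hz hlen
    rcases mem_cons1.1 hz with rfl | ⟨σ, hσ, rfl⟩
    · exact Or.inr (mem_cons1.2 (Or.inr ⟨[], hnil, rfl⟩))
    · have hlen' : σ.length < n := by simpa using hlen
      rcases h.2.2.2 σ hσ hlen' with hx | hx
      · exact Or.inl (by rw [List.cons_append]; exact mem_cons1.2 (Or.inr ⟨σ ++ [false], hx, rfl⟩))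
      · exact Or.inr (by rw [List.cons_append]; exact mem_cons1.2 (Or.inr ⟨σ ++ [true], hx, rfl⟩))

lemma finTree_cons01 {n : ℕ} {A B : Finset (List Bool)} (hA : FinTree n A) (hB : FinTree n B) :
    FinTree (n+1) (cons01 A B) := by
  have hnilA : [] ∈ A := nil_mem_finTree hA
  have hnilB : [] ∈ B := nil_mem_finTree hB
  refine ⟨⟨[], mem_cons01.2 (Or.inl rfl)⟩, ?_, ?_, ?_⟩
  · intro z hz
    rcases mem_cons01.1 hz with rfl | ⟨σ, hσ, rfl⟩ | ⟨σ, hσ, rfl⟩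
    · simp
    · simpa using Nat.succ_le_succ (hA.2.1 σ hσ)
    · simpa using Nat.succ_le_succ (hB.2.1 σ hσ)
  · intro σ τ hp hτ
    rcases mem_cons01.1 hτ with rfl | ⟨τ', hτ', rfl⟩ | ⟨τ', hτ', rfl⟩
    · rw [List.prefix_nil.1 hp]; exact mem_cons01.2 (Or.inl rfl)
    · cases σ with
      | nil => exact mem_cons01.2 (Or.inl rfl)
      | cons a σ' =>
        rcases List.cons_prefix_cons.1 hp with ⟨rfl, hp'⟩
        exact mem_cons01.2 (Or.inr (Or.inl ⟨σ', hA.2.2.1 σ' τ' hp' hτ', rfl⟩))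
    · cases σ with
      | nil => exact mem_cons01.2 (Or.inl rfl)
      | cons a σ' =>
        rcases List.cons_prefix_cons.1 hp with ⟨rfl, hp'⟩
        exact mem_cons01.2 (Or.inr (Or.inr ⟨σ', hB.2.2.1 σ' τ' hp' hτ', rfl⟩))
  · intro z hz hlen
    rcases mem_cons01.1 hz with rfl | ⟨σ, hσ, rfl⟩ | ⟨σ, hσ, rfl⟩
    · exact Or.inl (mem_cons01.2 (Or.inr (Or.inl ⟨[], hnilA, rfl⟩)))
    · have hlen' : σ.length < n := by simpa using hlen
      rcases hA.2.2.2 σ hσ hlen' with hx | hx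
      · refine Or.inl ?_
        rw [List.cons_append]
        exact mem_cons01.2 (Or.inr (Or.inl ⟨σ ++ [false], hx, rfl⟩))
      · refine Or.inr ?_
        rw [List.cons_append]
        exact mem_cons01.2 (Or.inr (Or.inl ⟨σ ++ [true], hx, rfl⟩))
    · have hlen' : σ.length < n := by simpa using hlen
      rcases hB.2.2.2 σ hσ hlen' with hx | hx
      · refine Or.inl ?_
        rw [List.cons_append]
        exact mem_cons01.2 (Or.inr (Or.inr ⟨σ ++ [false], hx, rfl⟩))
      · refine Or.inr ?_
        rw [List.cons_append]
        exact mem_cons01.2 (Or.inr (Or.inr ⟨σ ++ [true], hx, rfl⟩))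

lemma finTree_of_mem_Trees {n : ℕ} {A : Finset (List Bool)} (h : A ∈ Trees n) : FinTree n A := by
  induction n generalizing A with
  | zero =>
    simp [Trees] at h
    subst h
    refine ⟨⟨[], by simp⟩, by simp, ?_, by simp⟩
    intro σ τ hp hτ
    simp only [Finset.mem_singleton] at hτ ⊢
    subst hτ
    exact List.prefix_nil.1 hp
  | succ n ih =>
    simp only [Trees, Finset.mem_union, Finset.mem_image, Finset.mem_product] at h
    rcases h with (⟨A', hA', rfl⟩ | ⟨A', hA', rfl⟩) | ⟨p, hp, rfl⟩
    · exact finTree_cons0 (ih hA')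
    · exact finTree_cons1 (ih hA')
    · exact finTree_cons01 (ih hp.1) (ih hp.2)

/-- the subtree below the child `b` -/
def sub (b : Bool) (A : Finset (List Bool)) : Finset (List Bool) :=
  (A.image List.tail).filter (fun w => b :: w ∈ A)

lemma mem_sub {b : Bool} {A : Finset (List Bool)} {w : List Bool} :
    w ∈ sub b A ↔ b :: w ∈ A := by
  constructor
  · intro h; exact (Finset.mem_filter.1 h).2
  · intro h
    exact Finset.mem_filter.2 ⟨Finset.mem_image.2 ⟨b :: w, h, rfl⟩, h⟩

lemma finTree_sub {n : ℕ} {b : Bool} {A : Finset (List Bool)} (h : FinTree (n+1) A)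
    (hb : [b] ∈ A) : FinTree n (sub b A) := by
  refine ⟨⟨[], mem_sub.2 hb⟩, ?_, ?_, ?_⟩
  · intro σ hσ
    have := h.2.1 (b :: σ) (mem_sub.1 hσ)
    simpa using this
  · intro σ τ hp hτ
    exact mem_sub.2 (h.2.2.1 (b :: σ) (b :: τ) (List.cons_prefix_cons.2 ⟨rfl, hp⟩) (mem_sub.1 hτ))
  · intro σ hσ hlen
    have := h.2.2.2 (b :: σ) (mem_sub.1 hσ) (by simpa using hlen)
    rcases this with hx | hx
    · exact Or.inl (mem_sub.2 (by rwa [List.cons_append] at hx))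
    · exact Or.inr (mem_sub.2 (by rwa [List.cons_append] at hx))

lemma mem_Trees_of_finTree {n : ℕ} {A : Finset (List Bool)} (h : FinTree n A) : A ∈ Trees n := by
  induction n generalizing A with
  | zero =>
    have : A = {[]} := by
      apply Finset.ext
      intro z
      simp only [Finset.mem_singleton]
      constructor
      · intro hz
        have := h.2.1 z hz
        exact List.length_eq_zero_iff.1 (Nat.le_zero.1 this)
      · intro hz; subst hz; exact nil_mem_finTree h
    rw [this]
    exact Finset.mem_singleton.2 rfl
  | succ n ih =>
    have hnil : [] ∈ A := nil_mem_finTree h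
    have hchild : [false] ∈ A ∨ [true] ∈ A := by
      simpa using h.2.2.2 [] hnil (Nat.succ_pos n)
    by_cases hf : [false] ∈ A <;> by_cases ht : [true] ∈ A
    · -- both
      have h0 := finTree_sub h hf
      have h1 := finTree_sub h ht
      have hEq : A = cons01 (sub false A) (sub true A) := by
        apply Finset.ext
        intro z
        rw [mem_cons01]
        constructor
        · intro hz
          cases z with
          | nil => exact Or.inl rfl
          | cons a w =>
            cases a
            · exact Or.inr (Or.inl ⟨w, mem_sub.2 hz, rfl⟩)
            · exact Or.inr (Or.inr ⟨w, mem_sub.2 hz, rfl⟩)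
        · rintro (rfl | ⟨σ, hσ, rfl⟩ | ⟨σ, hσ, rfl⟩)
          · exact hnil
          · exact mem_sub.1 hσ
          · exact mem_sub.1 hσ
      rw [hEq]
      simp only [Trees, Finset.mem_union, Finset.mem_image]
      refine Or.inr ⟨(sub false A, sub true A), ?_, rfl⟩
      exact Finset.mem_product.2 ⟨ih h0, ih h1⟩
    · -- only false
      have h0 := finTree_sub h hf
      have hEq : A = cons0 (sub false A) := by
        apply Finset.ext
        intro z
        rw [mem_cons0]
        constructor
        · intro hz
          cases z with
          | nil => exact Or.inl rfl
          | cons a w =>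
            cases a
            · exact Or.inr ⟨w, mem_sub.2 hz, rfl⟩
            · exact absurd (h.2.2.1 [true] (true :: w) ⟨w, rfl⟩ hz) ht
        · rintro (rfl | ⟨σ, hσ, rfl⟩)
          · exact hnil
          · exact mem_sub.1 hσ
      rw [hEq]
      simp only [Trees, Finset.mem_union, Finset.mem_image]
      exact Or.inl (Or.inl ⟨sub false A, ih h0, rfl⟩)
    · -- only true
      have h1 := finTree_sub h ht
      have hEq : A = cons1 (sub true A) := by
        apply Finset.ext
        intro z
        rw [mem_cons1]
        constructor
        · intro hz
          cases z with
          | nil => exact Or.inl rfl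
          | cons a w =>
            cases a
            · exact absurd (h.2.2.1 [false] (false :: w) ⟨w, rfl⟩ hz) hf
            · exact Or.inr ⟨w, mem_sub.2 hz, rfl⟩
        · rintro (rfl | ⟨σ, hσ, rfl⟩)
          · exact hnil
          · exact mem_sub.1 hσ
      rw [hEq]
      simp only [Trees, Finset.mem_union, Finset.mem_image]
      exact Or.inl (Or.inr ⟨sub true A, ih h1, rfl⟩)
    · rcases hchild with hc | hc
      · exact absurd hc hf
      · exact absurd hc ht

end Stmt3A
namespace Stmt3A

lemma cons_mem_cons0 {A : Finset (List Bool)} {w : List Bool} :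
    false :: w ∈ cons0 A ↔ w ∈ A := by simp [mem_cons0]

lemma cons_mem_cons0' {A : Finset (List Bool)} {w : List Bool} :
    ¬ (true :: w ∈ cons0 A) := by simp [mem_cons0]

lemma cons_mem_cons1 {A : Finset (List Bool)} {w : List Bool} :
    true :: w ∈ cons1 A ↔ w ∈ A := by simp [mem_cons1]

lemma cons_mem_cons1' {A : Finset (List Bool)} {w : List Bool} :
    ¬ (false :: w ∈ cons1 A) := by simp [mem_cons1]

lemma cons_mem_cons01_f {A B : Finset (List Bool)} {w : List Bool} :
    false :: w ∈ cons01 A B ↔ w ∈ A := by simp [mem_cons01]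

lemma cons_mem_cons01_t {A B : Finset (List Bool)} {w : List Bool} :
    true :: w ∈ cons01 A B ↔ w ∈ B := by simp [mem_cons01]

variable (b0 b1 : ℝ)

/-- total weight of a tree -/
noncomputable def Wt (n : ℕ) (A : Finset (List Bool)) : ℝ :=
  ∏ σ ∈ A.filter (fun σ => σ.length < n), asymWeight b0 b1 A σ

lemma Wt_zero : Wt b0 b1 0 {[]} = 1 := by
  simp [Wt]

lemma asym_cons0_nil {A : Finset (List Bool)} (h : [] ∈ A) :
    asymWeight b0 b1 (cons0 A) [] = b0 := by
  have h1 : [false] ∈ cons0 A := by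
    simpa [cons_mem_cons0] using h
  have h2 : ¬ ([true] ∈ cons0 A) := by
    simpa using cons_mem_cons0' (A := A) (w := [])
  simp [asymWeight, h1, h2]

lemma asym_cons1_nil {A : Finset (List Bool)} (h : [] ∈ A) :
    asymWeight b0 b1 (cons1 A) [] = b1 := by
  have h1 : [true] ∈ cons1 A := by
    simpa [cons_mem_cons1] using h
  have h2 : ¬ ([false] ∈ cons1 A) := by
    simpa using cons_mem_cons1' (A := A) (w := [])
  simp [asymWeight, h1, h2]

lemma asym_cons01_nil {A B : Finset (List Bool)} (hA : [] ∈ A) (hB : [] ∈ B) :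
    asymWeight b0 b1 (cons01 A B) [] = 1 - b0 - b1 := by
  have h1 : [false] ∈ cons01 A B := by
    simpa [cons_mem_cons01_f] using hA
  have h2 : [true] ∈ cons01 A B := by
    simpa [cons_mem_cons01_t] using hB
  simp [asymWeight, h1, h2]

lemma asym_cons0_cons {A : Finset (List Bool)} (σ : List Bool) :
    asymWeight b0 b1 (cons0 A) (false :: σ) = asymWeight b0 b1 A σ := by
  simp only [asymWeight, List.cons_append, cons_mem_cons0]

lemma asym_cons1_cons {A : Finset (List Bool)} (σ : List Bool) :
    asymWeight b0 b1 (cons1 A) (true :: σ) = asymWeight b0 b1 A σ := by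
  simp only [asymWeight, List.cons_append, cons_mem_cons1]

lemma asym_cons01_cons_f {A B : Finset (List Bool)} (σ : List Bool) :
    asymWeight b0 b1 (cons01 A B) (false :: σ) = asymWeight b0 b1 A σ := by
  simp only [asymWeight, List.cons_append, cons_mem_cons01_f]

lemma asym_cons01_cons_t {A B : Finset (List Bool)} (σ : List Bool) :
    asymWeight b0 b1 (cons01 A B) (true :: σ) = asymWeight b0 b1 B σ := by
  simp only [asymWeight, List.cons_append, cons_mem_cons01_t]

lemma filter_cons0 {A : Finset (List Bool)} (n : ℕ) :
    (cons0 A).filter (fun σ => σ.length < n + 1) =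
      insert [] ((A.filter (fun σ => σ.length < n)).image (List.cons false)) := by
  apply Finset.ext
  intro z
  simp only [Finset.mem_filter, Finset.mem_insert, Finset.mem_image, mem_cons0]
  constructor
  · rintro ⟨rfl | ⟨σ, hσ, rfl⟩, hlen⟩
    · exact Or.inl rfl
    · exact Or.inr ⟨σ, ⟨hσ, by simpa using hlen⟩, rfl⟩
  · rintro (rfl | ⟨σ, ⟨hσ, hlen⟩, rfl⟩)
    · exact ⟨Or.inl rfl, by simp⟩
    · exact ⟨Or.inr ⟨σ, hσ, rfl⟩, by simpa using hlen⟩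

lemma filter_cons1 {A : Finset (List Bool)} (n : ℕ) :
    (cons1 A).filter (fun σ => σ.length < n + 1) =
      insert [] ((A.filter (fun σ => σ.length < n)).image (List.cons true)) := by
  apply Finset.ext
  intro z
  simp only [Finset.mem_filter, Finset.mem_insert, Finset.mem_image, mem_cons1]
  constructor
  · rintro ⟨rfl | ⟨σ, hσ, rfl⟩, hlen⟩
    · exact Or.inl rfl
    · exact Or.inr ⟨σ, ⟨hσ, by simpa using hlen⟩, rfl⟩
  · rintro (rfl | ⟨σ, ⟨hσ, hlen⟩, rfl⟩)
    · exact ⟨Or.inl rfl, by simp⟩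
    · exact ⟨Or.inr ⟨σ, hσ, rfl⟩, by simpa using hlen⟩

lemma filter_cons01 {A B : Finset (List Bool)} (n : ℕ) :
    (cons01 A B).filter (fun σ => σ.length < n + 1) =
      insert [] (((A.filter (fun σ => σ.length < n)).image (List.cons false)) ∪
        ((B.filter (fun σ => σ.length < n)).image (List.cons true))) := by
  apply Finset.ext
  intro z
  simp only [Finset.mem_filter, Finset.mem_insert, Finset.mem_image, Finset.mem_union, mem_cons01]
  constructor
  · rintro ⟨rfl | ⟨σ, hσ, rfl⟩ | ⟨σ, hσ, rfl⟩, hlen⟩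
    · exact Or.inl rfl
    · exact Or.inr (Or.inl ⟨σ, ⟨hσ, by simpa using hlen⟩, rfl⟩)
    · exact Or.inr (Or.inr ⟨σ, ⟨hσ, by simpa using hlen⟩, rfl⟩)
  · rintro (rfl | ⟨σ, ⟨hσ, hlen⟩, rfl⟩ | ⟨σ, ⟨hσ, hlen⟩, rfl⟩)
    · exact ⟨Or.inl rfl, by simp⟩
    · exact ⟨Or.inr (Or.inl ⟨σ, hσ, rfl⟩), by simpa using hlen⟩
    · exact ⟨Or.inr (Or.inr ⟨σ, hσ, rfl⟩), by simpa using hlen⟩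

lemma Wt_cons0 {A : Finset (List Bool)} (n : ℕ) (h : [] ∈ A) :
    Wt b0 b1 (n+1) (cons0 A) = b0 * Wt b0 b1 n A := by
  rw [Wt, filter_cons0, Finset.prod_insert (by simp)]
  rw [Finset.prod_image (fun x _ y _ h => List.cons_injective h)]
  rw [asym_cons0_nil b0 b1 h]
  congr 1
  exact Finset.prod_congr rfl (fun σ _ => asym_cons0_cons b0 b1 σ)

lemma Wt_cons1 {A : Finset (List Bool)} (n : ℕ) (h : [] ∈ A) :
    Wt b0 b1 (n+1) (cons1 A) = b1 * Wt b0 b1 n A := by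
  rw [Wt, filter_cons1, Finset.prod_insert (by simp)]
  rw [Finset.prod_image (fun x _ y _ h => List.cons_injective h)]
  rw [asym_cons1_nil b0 b1 h]
  congr 1
  exact Finset.prod_congr rfl (fun σ _ => asym_cons1_cons b0 b1 σ)

lemma Wt_cons01 {A B : Finset (List Bool)} (n : ℕ) (hA : [] ∈ A) (hB : [] ∈ B) :
    Wt b0 b1 (n+1) (cons01 A B) = (1 - b0 - b1) * (Wt b0 b1 n A * Wt b0 b1 n B) := by
  rw [Wt, filter_cons01, Finset.prod_insert (by simp)]
  rw [Finset.prod_union (by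
    rw [Finset.disjoint_left]
    rintro z hz hz'
    rcases Finset.mem_image.1 hz with ⟨σ, _, rfl⟩
    rcases Finset.mem_image.1 hz' with ⟨τ, _, h⟩
    exact absurd (List.head_eq_of_cons_eq h.symm) (by simp))]
  rw [Finset.prod_image (fun x _ y _ h => List.cons_injective h),
    Finset.prod_image (fun x _ y _ h => List.cons_injective h)]
  rw [asym_cons01_nil b0 b1 hA hB]
  congr 1
  congr 1
  · exact Finset.prod_congr rfl (fun σ _ => asym_cons01_cons_f b0 b1 σ)
  · exact Finset.prod_congr rfl (fun σ _ => asym_cons01_cons_t b0 b1 σ)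

end Stmt3A
namespace Stmt3A

lemma cons0_ne_cons1 {A A' : Finset (List Bool)} (hA : [] ∈ A) :
    cons0 A ≠ cons1 A' := by
  intro h
  have : [false] ∈ cons0 A := cons_mem_cons0.2 hA
  rw [h] at this
  exact cons_mem_cons1' this

lemma cons0_ne_cons01 {A A' B' : Finset (List Bool)} (hB : [] ∈ B') :
    cons0 A ≠ cons01 A' B' := by
  intro h
  have : [true] ∈ cons01 A' B' := cons_mem_cons01_t.2 hB
  rw [← h] at this
  exact cons_mem_cons0' this

lemma cons1_ne_cons01 {A A' B' : Finset (List Bool)} (hA : [] ∈ A') :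
    cons1 A ≠ cons01 A' B' := by
  intro h
  have : [false] ∈ cons01 A' B' := cons_mem_cons01_f.2 hA
  rw [← h] at this
  exact cons_mem_cons1' this

lemma cons0_injective : Function.Injective cons0 := by
  intro A A' h
  apply Finset.ext
  intro z
  rw [← cons_mem_cons0 (A := A), ← cons_mem_cons0 (A := A'), h]

lemma cons1_injective : Function.Injective cons1 := by
  intro A A' h
  apply Finset.ext
  intro z
  rw [← cons_mem_cons1 (A := A), ← cons_mem_cons1 (A := A'), h]

lemma cons01_injective {A B A' B' : Finset (List Bool)} (h : cons01 A B = cons01 A' B') :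
    A = A' ∧ B = B' := by
  constructor
  · apply Finset.ext; intro z
    constructor
    · intro hz
      have h2 : false :: z ∈ cons01 A B := cons_mem_cons01_f.2 hz
      rw [h] at h2
      exact cons_mem_cons01_f.1 h2
    · intro hz
      have h2 : false :: z ∈ cons01 A' B' := cons_mem_cons01_f.2 hz
      rw [← h] at h2
      exact cons_mem_cons01_f.1 h2
  · apply Finset.ext; intro z
    constructor
    · intro hz
      have h2 : true :: z ∈ cons01 A B := cons_mem_cons01_t.2 hz
      rw [h] at h2
      exact cons_mem_cons01_t.1 h2
    · intro hz
      have h2 : true :: z ∈ cons01 A' B' := cons_mem_cons01_t.2 hz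
      rw [← h] at h2
      exact cons_mem_cons01_t.1 h2

lemma nil_mem_of_mem_Trees' {n : ℕ} {A : Finset (List Bool)} (h : A ∈ Trees n) : [] ∈ A :=
  nil_mem_finTree (finTree_of_mem_Trees h)

lemma sum_Trees_succ (n : ℕ) (f : Finset (List Bool) → ℝ) :
    ∑ T ∈ Trees (n+1), f T =
      (∑ A ∈ Trees n, f (cons0 A)) + (∑ A ∈ Trees n, f (cons1 A)) +
      ∑ A ∈ Trees n, ∑ B ∈ Trees n, f (cons01 A B) := by
  have hd01 : Disjoint ((Trees n).image cons0) ((Trees n).image cons1) := by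
    rw [Finset.disjoint_left]
    rintro T hT hT'
    rcases Finset.mem_image.1 hT with ⟨A, hA, rfl⟩
    rcases Finset.mem_image.1 hT' with ⟨A', _, h⟩
    exact cons0_ne_cons1 (nil_mem_of_mem_Trees' hA) h.symm
  have hd2 : Disjoint ((Trees n).image cons0 ∪ (Trees n).image cons1)
      (((Trees n) ×ˢ (Trees n)).image (fun p => cons01 p.1 p.2)) := by
    rw [Finset.disjoint_left]
    rintro T hT hT'
    rcases Finset.mem_image.1 hT' with ⟨p, hp, rfl⟩
    have hp2 := (Finset.mem_product.1 hp).2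
    have hp1 := (Finset.mem_product.1 hp).1
    rcases Finset.mem_union.1 hT with h | h
    · rcases Finset.mem_image.1 h with ⟨A, _, hEq⟩
      exact cons0_ne_cons01 (nil_mem_of_mem_Trees' hp2) hEq
    · rcases Finset.mem_image.1 h with ⟨A, _, hEq⟩
      exact cons1_ne_cons01 (nil_mem_of_mem_Trees' hp1) hEq
  rw [show Trees (n+1) = ((Trees n).image cons0 ∪ (Trees n).image cons1) ∪
      ((Trees n) ×ˢ (Trees n)).image (fun p => cons01 p.1 p.2) from rfl]
  rw [Finset.sum_union hd2, Finset.sum_union hd01]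
  rw [Finset.sum_image (fun x _ y _ h => cons0_injective h),
    Finset.sum_image (fun x _ y _ h => cons1_injective h),
    Finset.sum_image (fun x _ y _ h => Prod.ext (cons01_injective h).1 (cons01_injective h).2)]
  rw [Finset.sum_product]

lemma Trees_zero : Trees 0 = {{([] : List Bool)}} := rfl

lemma sum_Wt_eq_one (n : ℕ) : ∑ T ∈ Trees n, Wt b0 b1 n T = 1 := by
  induction n with
  | zero => simp [Trees_zero, Wt_zero]
  | succ n ih =>
    rw [sum_Trees_succ n (Wt b0 b1 (n+1))]
    have e0 : ∑ A ∈ Trees n, Wt b0 b1 (n+1) (cons0 A) = b0 := by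
      rw [Finset.sum_congr rfl (fun A hA => Wt_cons0 b0 b1 n (nil_mem_of_mem_Trees' hA))]
      rw [← Finset.mul_sum, ih, mul_one]
    have e1 : ∑ A ∈ Trees n, Wt b0 b1 (n+1) (cons1 A) = b1 := by
      rw [Finset.sum_congr rfl (fun A hA => Wt_cons1 b0 b1 n (nil_mem_of_mem_Trees' hA))]
      rw [← Finset.mul_sum, ih, mul_one]
    have e2 : ∑ A ∈ Trees n, ∑ B ∈ Trees n, Wt b0 b1 (n+1) (cons01 A B) = 1 - b0 - b1 := by
      have : ∀ A ∈ Trees n, ∑ B ∈ Trees n, Wt b0 b1 (n+1) (cons01 A B)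
          = (1 - b0 - b1) * Wt b0 b1 n A := by
        intro A hA
        rw [Finset.sum_congr rfl
          (fun B hB => Wt_cons01 b0 b1 n (nil_mem_of_mem_Trees' hA) (nil_mem_of_mem_Trees' hB))]
        rw [← Finset.mul_sum, ← Finset.mul_sum, ih, mul_one]
      rw [Finset.sum_congr rfl this, ← Finset.mul_sum, ih, mul_one]
    rw [e0, e1, e2]; ring

/-- per-step survival factors -/
def cval (b0 b1 : ℝ) (b : Bool) : ℝ := if b then 1 - b0 else 1 - b1

def pval (b0 b1 : ℝ) : List Bool → ℝ
  | [] => 1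
  | a :: σ => cval b0 b1 a * pval b0 b1 σ

def hval (b0 b1 : ℝ) : List Bool → List Bool → ℝ
  | [], [] => 1
  | a :: σ, b :: τ =>
      if a = b then cval b0 b1 a * hval b0 b1 σ τ else (1 - b0 - b1) * (pval b0 b1 σ * pval b0 b1 τ)
  | _, _ => 0

lemma gsum (n : ℕ) (σ : List Bool) (hσ : σ.length = n) :
    ∑ T ∈ Trees n, (if σ ∈ T then Wt b0 b1 n T else 0) = pval b0 b1 σ := by
  induction n generalizing σ with
  | zero =>
    rcases List.length_eq_zero_iff.1 hσ with rfl
    simp [Trees_zero, Wt_zero, pval]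
  | succ n ih =>
    rcases σ with _ | ⟨a, σ'⟩
    · simp at hσ
    have hσ' : σ'.length = n := by simpa using hσ
    rw [sum_Trees_succ n (fun T => if a :: σ' ∈ T then Wt b0 b1 (n+1) T else 0)]
    cases a
    · have e0 : ∑ A ∈ Trees n, (if false :: σ' ∈ cons0 A then Wt b0 b1 (n+1) (cons0 A) else 0)
          = b0 * pval b0 b1 σ' := by
        have step : ∀ A ∈ Trees n,
            (if false :: σ' ∈ cons0 A then Wt b0 b1 (n+1) (cons0 A) else 0)
            = b0 * (if σ' ∈ A then Wt b0 b1 n A else 0) := by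
          intro A hA
          by_cases h : σ' ∈ A
          · rw [if_pos (cons_mem_cons0.2 h), if_pos h, Wt_cons0 b0 b1 n (nil_mem_of_mem_Trees' hA)]
          · rw [if_neg (fun hc => h (cons_mem_cons0.1 hc)), if_neg h, mul_zero]
        rw [Finset.sum_congr rfl step, ← Finset.mul_sum, ih σ' hσ']
      have e1 : ∑ A ∈ Trees n, (if false :: σ' ∈ cons1 A then Wt b0 b1 (n+1) (cons1 A) else 0)
          = 0 :=
        Finset.sum_eq_zero (fun A hA => if_neg cons_mem_cons1')
      have e2 : ∑ A ∈ Trees n, ∑ B ∈ Trees n,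
          (if false :: σ' ∈ cons01 A B then Wt b0 b1 (n+1) (cons01 A B) else 0)
          = (1 - b0 - b1) * pval b0 b1 σ' := by
        have inner : ∀ A ∈ Trees n, ∑ B ∈ Trees n,
            (if false :: σ' ∈ cons01 A B then Wt b0 b1 (n+1) (cons01 A B) else 0)
            = (1 - b0 - b1) * (if σ' ∈ A then Wt b0 b1 n A else 0) := by
          intro A hA
          have step : ∀ B ∈ Trees n,
              (if false :: σ' ∈ cons01 A B then Wt b0 b1 (n+1) (cons01 A B) else 0)
              = ((1 - b0 - b1) * (if σ' ∈ A then Wt b0 b1 n A else 0)) * Wt b0 b1 n B := by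
            intro B hB
            by_cases h : σ' ∈ A
            · rw [if_pos (cons_mem_cons01_f.2 h), if_pos h,
                Wt_cons01 b0 b1 n (nil_mem_of_mem_Trees' hA) (nil_mem_of_mem_Trees' hB)]
              ring
            · rw [if_neg (fun hc => h (cons_mem_cons01_f.1 hc)), if_neg h, mul_zero, zero_mul]
          rw [Finset.sum_congr rfl step, ← Finset.mul_sum, sum_Wt_eq_one, mul_one]
        rw [Finset.sum_congr rfl inner, ← Finset.mul_sum, ih σ' hσ']
      rw [e0, e1, e2]
      rw [show pval b0 b1 (false :: σ') = cval b0 b1 false * pval b0 b1 σ' from rfl]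
      rw [show cval b0 b1 false = 1 - b1 from rfl]
      ring
    · have e0 : ∑ A ∈ Trees n, (if true :: σ' ∈ cons0 A then Wt b0 b1 (n+1) (cons0 A) else 0)
          = 0 :=
        Finset.sum_eq_zero (fun A hA => if_neg cons_mem_cons0')
      have e1 : ∑ A ∈ Trees n, (if true :: σ' ∈ cons1 A then Wt b0 b1 (n+1) (cons1 A) else 0)
          = b1 * pval b0 b1 σ' := by
        have step : ∀ A ∈ Trees n,
            (if true :: σ' ∈ cons1 A then Wt b0 b1 (n+1) (cons1 A) else 0)
            = b1 * (if σ' ∈ A then Wt b0 b1 n A else 0) := by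
          intro A hA
          by_cases h : σ' ∈ A
          · rw [if_pos (cons_mem_cons1.2 h), if_pos h, Wt_cons1 b0 b1 n (nil_mem_of_mem_Trees' hA)]
          · rw [if_neg (fun hc => h (cons_mem_cons1.1 hc)), if_neg h, mul_zero]
        rw [Finset.sum_congr rfl step, ← Finset.mul_sum, ih σ' hσ']
      have e2 : ∑ A ∈ Trees n, ∑ B ∈ Trees n,
          (if true :: σ' ∈ cons01 A B then Wt b0 b1 (n+1) (cons01 A B) else 0)
          = (1 - b0 - b1) * pval b0 b1 σ' := by
        have inner : ∀ A ∈ Trees n, ∑ B ∈ Trees n,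
            (if true :: σ' ∈ cons01 A B then Wt b0 b1 (n+1) (cons01 A B) else 0)
            = ((1 - b0 - b1) * pval b0 b1 σ') * Wt b0 b1 n A := by
          intro A hA
          have step : ∀ B ∈ Trees n,
              (if true :: σ' ∈ cons01 A B then Wt b0 b1 (n+1) (cons01 A B) else 0)
              = ((1 - b0 - b1) * Wt b0 b1 n A) * (if σ' ∈ B then Wt b0 b1 n B else 0) := by
            intro B hB
            by_cases h : σ' ∈ B
            · rw [if_pos (cons_mem_cons01_t.2 h), if_pos h,
                Wt_cons01 b0 b1 n (nil_mem_of_mem_Trees' hA) (nil_mem_of_mem_Trees' hB)]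
              ring
            · rw [if_neg (fun hc => h (cons_mem_cons01_t.1 hc)), if_neg h, mul_zero]
          rw [Finset.sum_congr rfl step, ← Finset.mul_sum, ih σ' hσ']
          ring
        rw [Finset.sum_congr rfl inner, ← Finset.mul_sum, sum_Wt_eq_one, mul_one]
      rw [e0, e1, e2]
      rw [show pval b0 b1 (true :: σ') = cval b0 b1 true * pval b0 b1 σ' from rfl]
      rw [show cval b0 b1 true = 1 - b0 from rfl]
      ring

lemma hsum (n : ℕ) (σ τ : List Bool) (hσ : σ.length = n) (hτ : τ.length = n) :
    ∑ T ∈ Trees n, (if σ ∈ T ∧ τ ∈ T then Wt b0 b1 n T else 0) = hval b0 b1 σ τ := by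
  induction n generalizing σ τ with
  | zero =>
    rcases List.length_eq_zero_iff.1 hσ with rfl
    rcases List.length_eq_zero_iff.1 hτ with rfl
    simp [Trees_zero, Wt_zero, hval]
  | succ n ih =>
    rcases σ with _ | ⟨a, σ'⟩
    · simp at hσ
    rcases τ with _ | ⟨b, τ'⟩
    · simp at hτ
    have hσ' : σ'.length = n := by simpa using hσ
    have hτ' : τ'.length = n := by simpa using hτ
    rw [sum_Trees_succ n (fun T => if a :: σ' ∈ T ∧ b :: τ' ∈ T then Wt b0 b1 (n+1) T else 0)]
    cases a <;> cases b
    · -- false false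
      have e0 : ∑ A ∈ Trees n,
          (if false :: σ' ∈ cons0 A ∧ false :: τ' ∈ cons0 A then Wt b0 b1 (n+1) (cons0 A) else 0)
          = b0 * hval b0 b1 σ' τ' := by
        have step : ∀ A ∈ Trees n,
            (if false :: σ' ∈ cons0 A ∧ false :: τ' ∈ cons0 A then Wt b0 b1 (n+1) (cons0 A) else 0)
            = b0 * (if σ' ∈ A ∧ τ' ∈ A then Wt b0 b1 n A else 0) := by
          intro A hA
          by_cases h : σ' ∈ A ∧ τ' ∈ A
          · rw [if_pos ⟨cons_mem_cons0.2 h.1, cons_mem_cons0.2 h.2⟩, if_pos h,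
              Wt_cons0 b0 b1 n (nil_mem_of_mem_Trees' hA)]
          · rw [if_neg (fun hc => h ⟨cons_mem_cons0.1 hc.1, cons_mem_cons0.1 hc.2⟩), if_neg h,
              mul_zero]
        rw [Finset.sum_congr rfl step, ← Finset.mul_sum, ih σ' τ' hσ' hτ']
      have e1 : ∑ A ∈ Trees n,
          (if false :: σ' ∈ cons1 A ∧ false :: τ' ∈ cons1 A then Wt b0 b1 (n+1) (cons1 A) else 0)
          = 0 :=
        Finset.sum_eq_zero (fun A hA => if_neg (fun hc => cons_mem_cons1' hc.1))
      have e2 : ∑ A ∈ Trees n, ∑ B ∈ Trees n,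
          (if false :: σ' ∈ cons01 A B ∧ false :: τ' ∈ cons01 A B
            then Wt b0 b1 (n+1) (cons01 A B) else 0)
          = (1 - b0 - b1) * hval b0 b1 σ' τ' := by
        have inner : ∀ A ∈ Trees n, ∑ B ∈ Trees n,
            (if false :: σ' ∈ cons01 A B ∧ false :: τ' ∈ cons01 A B
              then Wt b0 b1 (n+1) (cons01 A B) else 0)
            = (1 - b0 - b1) * (if σ' ∈ A ∧ τ' ∈ A then Wt b0 b1 n A else 0) := by
          intro A hA
          have step : ∀ B ∈ Trees n,
              (if false :: σ' ∈ cons01 A B ∧ false :: τ' ∈ cons01 A B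
                then Wt b0 b1 (n+1) (cons01 A B) else 0)
              = ((1 - b0 - b1) * (if σ' ∈ A ∧ τ' ∈ A then Wt b0 b1 n A else 0)) * Wt b0 b1 n B := by
            intro B hB
            by_cases h : σ' ∈ A ∧ τ' ∈ A
            · rw [if_pos ⟨cons_mem_cons01_f.2 h.1, cons_mem_cons01_f.2 h.2⟩, if_pos h,
                Wt_cons01 b0 b1 n (nil_mem_of_mem_Trees' hA) (nil_mem_of_mem_Trees' hB)]
              ring
            · rw [if_neg (fun hc => h ⟨cons_mem_cons01_f.1 hc.1, cons_mem_cons01_f.1 hc.2⟩),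
                if_neg h, mul_zero, zero_mul]
          rw [Finset.sum_congr rfl step, ← Finset.mul_sum, sum_Wt_eq_one, mul_one]
        rw [Finset.sum_congr rfl inner, ← Finset.mul_sum, ih σ' τ' hσ' hτ']
      rw [e0, e1, e2]
      rw [show hval b0 b1 (false :: σ') (false :: τ')
        = cval b0 b1 false * hval b0 b1 σ' τ' from by simp [hval]]
      rw [show cval b0 b1 false = 1 - b1 from rfl]
      ring
    · -- false true
      have e0 : ∑ A ∈ Trees n,
          (if false :: σ' ∈ cons0 A ∧ true :: τ' ∈ cons0 A then Wt b0 b1 (n+1) (cons0 A) else 0)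
          = 0 :=
        Finset.sum_eq_zero (fun A hA => if_neg (fun hc => cons_mem_cons0' hc.2))
      have e1 : ∑ A ∈ Trees n,
          (if false :: σ' ∈ cons1 A ∧ true :: τ' ∈ cons1 A then Wt b0 b1 (n+1) (cons1 A) else 0)
          = 0 :=
        Finset.sum_eq_zero (fun A hA => if_neg (fun hc => cons_mem_cons1' hc.1))
      have e2 : ∑ A ∈ Trees n, ∑ B ∈ Trees n,
          (if false :: σ' ∈ cons01 A B ∧ true :: τ' ∈ cons01 A B
            then Wt b0 b1 (n+1) (cons01 A B) else 0)
          = (1 - b0 - b1) * (pval b0 b1 σ' * pval b0 b1 τ') := by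
        have inner : ∀ A ∈ Trees n, ∑ B ∈ Trees n,
            (if false :: σ' ∈ cons01 A B ∧ true :: τ' ∈ cons01 A B
              then Wt b0 b1 (n+1) (cons01 A B) else 0)
            = ((1 - b0 - b1) * pval b0 b1 τ') * (if σ' ∈ A then Wt b0 b1 n A else 0) := by
          intro A hA
          have step : ∀ B ∈ Trees n,
              (if false :: σ' ∈ cons01 A B ∧ true :: τ' ∈ cons01 A B
                then Wt b0 b1 (n+1) (cons01 A B) else 0)
              = ((1 - b0 - b1) * (if σ' ∈ A then Wt b0 b1 n A else 0)) *
                  (if τ' ∈ B then Wt b0 b1 n B else 0) := by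
            intro B hB
            by_cases h1 : σ' ∈ A
            · by_cases h2 : τ' ∈ B
              · rw [if_pos ⟨cons_mem_cons01_f.2 h1, cons_mem_cons01_t.2 h2⟩, if_pos h1, if_pos h2,
                  Wt_cons01 b0 b1 n (nil_mem_of_mem_Trees' hA) (nil_mem_of_mem_Trees' hB)]
                ring
              · rw [if_neg (fun hc => h2 (cons_mem_cons01_t.1 hc.2)), if_neg h2, mul_zero]
            · rw [if_neg (fun hc => h1 (cons_mem_cons01_f.1 hc.1)), if_neg h1, mul_zero, zero_mul]
          rw [Finset.sum_congr rfl step, ← Finset.mul_sum, gsum n τ' hτ']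
          ring
        rw [Finset.sum_congr rfl inner, ← Finset.mul_sum, gsum n σ' hσ']
        ring
      rw [e0, e1, e2]
      rw [show hval b0 b1 (false :: σ') (true :: τ')
        = (1 - b0 - b1) * (pval b0 b1 σ' * pval b0 b1 τ') from by simp [hval]]
      ring
    · -- true false
      have e0 : ∑ A ∈ Trees n,
          (if true :: σ' ∈ cons0 A ∧ false :: τ' ∈ cons0 A then Wt b0 b1 (n+1) (cons0 A) else 0)
          = 0 :=
        Finset.sum_eq_zero (fun A hA => if_neg (fun hc => cons_mem_cons0' hc.1))
      have e1 : ∑ A ∈ Trees n,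
          (if true :: σ' ∈ cons1 A ∧ false :: τ' ∈ cons1 A then Wt b0 b1 (n+1) (cons1 A) else 0)
          = 0 :=
        Finset.sum_eq_zero (fun A hA => if_neg (fun hc => cons_mem_cons1' hc.2))
      have e2 : ∑ A ∈ Trees n, ∑ B ∈ Trees n,
          (if true :: σ' ∈ cons01 A B ∧ false :: τ' ∈ cons01 A B
            then Wt b0 b1 (n+1) (cons01 A B) else 0)
          = (1 - b0 - b1) * (pval b0 b1 σ' * pval b0 b1 τ') := by
        have inner : ∀ A ∈ Trees n, ∑ B ∈ Trees n,
            (if true :: σ' ∈ cons01 A B ∧ false :: τ' ∈ cons01 A B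
              then Wt b0 b1 (n+1) (cons01 A B) else 0)
            = ((1 - b0 - b1) * pval b0 b1 σ') * (if τ' ∈ A then Wt b0 b1 n A else 0) := by
          intro A hA
          have step : ∀ B ∈ Trees n,
              (if true :: σ' ∈ cons01 A B ∧ false :: τ' ∈ cons01 A B
                then Wt b0 b1 (n+1) (cons01 A B) else 0)
              = ((1 - b0 - b1) * (if τ' ∈ A then Wt b0 b1 n A else 0)) *
                  (if σ' ∈ B then Wt b0 b1 n B else 0) := by
            intro B hB
            by_cases h1 : τ' ∈ A
            · by_cases h2 : σ' ∈ B
              · rw [if_pos ⟨cons_mem_cons01_t.2 h2, cons_mem_cons01_f.2 h1⟩, if_pos h1, if_pos h2,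
                  Wt_cons01 b0 b1 n (nil_mem_of_mem_Trees' hA) (nil_mem_of_mem_Trees' hB)]
                ring
              · rw [if_neg (fun hc => h2 (cons_mem_cons01_t.1 hc.1)), if_neg h2, mul_zero]
            · rw [if_neg (fun hc => h1 (cons_mem_cons01_f.1 hc.2)), if_neg h1, mul_zero, zero_mul]
          rw [Finset.sum_congr rfl step, ← Finset.mul_sum, gsum n σ' hσ']
          ring
        rw [Finset.sum_congr rfl inner, ← Finset.mul_sum, gsum n τ' hτ']
        ring
      rw [e0, e1, e2]
      rw [show hval b0 b1 (true :: σ') (false :: τ')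
        = (1 - b0 - b1) * (pval b0 b1 σ' * pval b0 b1 τ') from by simp [hval]]
      ring
    · -- true true
      have e0 : ∑ A ∈ Trees n,
          (if true :: σ' ∈ cons0 A ∧ true :: τ' ∈ cons0 A then Wt b0 b1 (n+1) (cons0 A) else 0)
          = 0 :=
        Finset.sum_eq_zero (fun A hA => if_neg (fun hc => cons_mem_cons0' hc.1))
      have e1 : ∑ A ∈ Trees n,
          (if true :: σ' ∈ cons1 A ∧ true :: τ' ∈ cons1 A then Wt b0 b1 (n+1) (cons1 A) else 0)
          = b1 * hval b0 b1 σ' τ' := by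
        have step : ∀ A ∈ Trees n,
            (if true :: σ' ∈ cons1 A ∧ true :: τ' ∈ cons1 A then Wt b0 b1 (n+1) (cons1 A) else 0)
            = b1 * (if σ' ∈ A ∧ τ' ∈ A then Wt b0 b1 n A else 0) := by
          intro A hA
          by_cases h : σ' ∈ A ∧ τ' ∈ A
          · rw [if_pos ⟨cons_mem_cons1.2 h.1, cons_mem_cons1.2 h.2⟩, if_pos h,
              Wt_cons1 b0 b1 n (nil_mem_of_mem_Trees' hA)]
          · rw [if_neg (fun hc => h ⟨cons_mem_cons1.1 hc.1, cons_mem_cons1.1 hc.2⟩), if_neg h,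
              mul_zero]
        rw [Finset.sum_congr rfl step, ← Finset.mul_sum, ih σ' τ' hσ' hτ']
      have e2 : ∑ A ∈ Trees n, ∑ B ∈ Trees n,
          (if true :: σ' ∈ cons01 A B ∧ true :: τ' ∈ cons01 A B
            then Wt b0 b1 (n+1) (cons01 A B) else 0)
          = (1 - b0 - b1) * hval b0 b1 σ' τ' := by
        have inner : ∀ A ∈ Trees n, ∑ B ∈ Trees n,
            (if true :: σ' ∈ cons01 A B ∧ true :: τ' ∈ cons01 A B
              then Wt b0 b1 (n+1) (cons01 A B) else 0)
            = ((1 - b0 - b1) * hval b0 b1 σ' τ') * Wt b0 b1 n A := by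
          intro A hA
          have step : ∀ B ∈ Trees n,
              (if true :: σ' ∈ cons01 A B ∧ true :: τ' ∈ cons01 A B
                then Wt b0 b1 (n+1) (cons01 A B) else 0)
              = ((1 - b0 - b1) * Wt b0 b1 n A) * (if σ' ∈ B ∧ τ' ∈ B then Wt b0 b1 n B else 0) := by
            intro B hB
            by_cases h : σ' ∈ B ∧ τ' ∈ B
            · rw [if_pos ⟨cons_mem_cons01_t.2 h.1, cons_mem_cons01_t.2 h.2⟩, if_pos h,
                Wt_cons01 b0 b1 n (nil_mem_of_mem_Trees' hA) (nil_mem_of_mem_Trees' hB)]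
              ring
            · rw [if_neg (fun hc => h ⟨cons_mem_cons01_t.1 hc.1, cons_mem_cons01_t.1 hc.2⟩),
                if_neg h, mul_zero]
          rw [Finset.sum_congr rfl step, ← Finset.mul_sum, ih σ' τ' hσ' hτ']
          ring
        rw [Finset.sum_congr rfl inner, ← Finset.mul_sum, sum_Wt_eq_one, mul_one]
      rw [e0, e1, e2]
      rw [show hval b0 b1 (true :: σ') (true :: τ')
        = cval b0 b1 true * hval b0 b1 σ' τ' from by simp [hval]]
      rw [show cval b0 b1 true = 1 - b0 from rfl]
      ring

end Stmt3A
namespace Stmt3A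

variable (b0 b1 : ℝ)

def mval : ℝ := (1 - b0)^2 + (1 - b1)^2

lemma sum_LFin_succ (n : ℕ) (f : List Bool → ℝ) :
    ∑ σ ∈ LFin (n+1), f σ =
      (∑ σ ∈ LFin n, f (false :: σ)) + ∑ σ ∈ LFin n, f (true :: σ) := by
  have hd : Disjoint ((LFin n).image (List.cons false)) ((LFin n).image (List.cons true)) := by
    rw [Finset.disjoint_left]
    rintro z hz hz'
    rcases Finset.mem_image.1 hz with ⟨σ, _, rfl⟩
    rcases Finset.mem_image.1 hz' with ⟨τ, _, h⟩
    exact absurd (List.head_eq_of_cons_eq h.symm) (by simp)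
  rw [show LFin (n+1) = (LFin n).image (List.cons false) ∪ (LFin n).image (List.cons true)
    from rfl]
  rw [Finset.sum_union hd,
    Finset.sum_image (fun x _ y _ h => List.cons_injective h),
    Finset.sum_image (fun x _ y _ h => List.cons_injective h)]

lemma Msum (n : ℕ) : ∑ σ ∈ LFin n, (pval b0 b1 σ)^2 = (mval b0 b1)^n := by
  induction n with
  | zero => simp [LFin, pval]
  | succ n ih =>
    rw [sum_LFin_succ n (fun σ => (pval b0 b1 σ)^2)]
    have ef : ∀ σ, (pval b0 b1 (false :: σ))^2 = (1-b1)^2 * (pval b0 b1 σ)^2 := by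
      intro σ
      rw [show pval b0 b1 (false :: σ) = cval b0 b1 false * pval b0 b1 σ from rfl]
      rw [show cval b0 b1 false = 1 - b1 from rfl]
      ring
    have et : ∀ σ, (pval b0 b1 (true :: σ))^2 = (1-b0)^2 * (pval b0 b1 σ)^2 := by
      intro σ
      rw [show pval b0 b1 (true :: σ) = cval b0 b1 true * pval b0 b1 σ from rfl]
      rw [show cval b0 b1 true = 1 - b0 from rfl]
      ring
    simp only [ef, et]
    rw [← Finset.mul_sum, ← Finset.mul_sum, ih]
    rw [show (mval b0 b1)^(n+1) = mval b0 b1 * (mval b0 b1)^n from pow_succ' _ _]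
    rw [mval]
    ring

noncomputable def Sval (n : ℕ) : ℝ := ∑ σ ∈ LFin n, ∑ τ ∈ LFin n, (hval b0 b1 σ τ)^2

lemma hval_ff (σ τ : List Bool) :
    hval b0 b1 (false :: σ) (false :: τ) = (1 - b1) * hval b0 b1 σ τ := by
  simp [hval, cval]

lemma hval_tt (σ τ : List Bool) :
    hval b0 b1 (true :: σ) (true :: τ) = (1 - b0) * hval b0 b1 σ τ := by
  simp [hval, cval]

lemma hval_ft (σ τ : List Bool) :
    hval b0 b1 (false :: σ) (true :: τ) = (1 - b0 - b1) * (pval b0 b1 σ * pval b0 b1 τ) := by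
  simp [hval]

lemma hval_tf (σ τ : List Bool) :
    hval b0 b1 (true :: σ) (false :: τ) = (1 - b0 - b1) * (pval b0 b1 σ * pval b0 b1 τ) := by
  simp [hval]

lemma Sval_zero : Sval b0 b1 0 = 1 := by
  simp [Sval, LFin, hval]

lemma Sval_succ (n : ℕ) :
    Sval b0 b1 (n+1) = mval b0 b1 * Sval b0 b1 n
      + 2 * (1 - b0 - b1)^2 * ((mval b0 b1)^n)^2 := by
  rw [Sval, sum_LFin_succ n]
  have inner : ∀ σ : List Bool,
      ∑ τ ∈ LFin (n+1), (hval b0 b1 σ τ)^2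
      = (∑ τ ∈ LFin n, (hval b0 b1 σ (false :: τ))^2)
        + ∑ τ ∈ LFin n, (hval b0 b1 σ (true :: τ))^2 := by
    intro σ
    exact sum_LFin_succ n (fun τ => (hval b0 b1 σ τ)^2)
  have eFF : ∑ σ ∈ LFin n, ∑ τ ∈ LFin n, (hval b0 b1 (false :: σ) (false :: τ))^2
      = (1-b1)^2 * Sval b0 b1 n := by
    rw [Sval, Finset.mul_sum]
    apply Finset.sum_congr rfl
    intro σ _
    rw [Finset.mul_sum]
    apply Finset.sum_congr rfl
    intro τ _
    rw [hval_ff]; ring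
  have eTT : ∑ σ ∈ LFin n, ∑ τ ∈ LFin n, (hval b0 b1 (true :: σ) (true :: τ))^2
      = (1-b0)^2 * Sval b0 b1 n := by
    rw [Sval, Finset.mul_sum]
    apply Finset.sum_congr rfl
    intro σ _
    rw [Finset.mul_sum]
    apply Finset.sum_congr rfl
    intro τ _
    rw [hval_tt]; ring
  have eFT : ∑ σ ∈ LFin n, ∑ τ ∈ LFin n, (hval b0 b1 (false :: σ) (true :: τ))^2
      = (1 - b0 - b1)^2 * ((mval b0 b1)^n)^2 := by
    have : ∀ σ ∈ LFin n, ∑ τ ∈ LFin n, (hval b0 b1 (false :: σ) (true :: τ))^2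
        = ((1 - b0 - b1)^2 * (mval b0 b1)^n) * (pval b0 b1 σ)^2 := by
      intro σ _
      have step : ∀ τ ∈ LFin n, (hval b0 b1 (false :: σ) (true :: τ))^2
          = ((1 - b0 - b1)^2 * (pval b0 b1 σ)^2) * (pval b0 b1 τ)^2 := by
        intro τ _
        rw [hval_ft]; ring
      rw [Finset.sum_congr rfl step, ← Finset.mul_sum, Msum]
      ring
    rw [Finset.sum_congr rfl this, ← Finset.mul_sum, Msum]
    ring
  have eTF : ∑ σ ∈ LFin n, ∑ τ ∈ LFin n, (hval b0 b1 (true :: σ) (false :: τ))^2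
      = (1 - b0 - b1)^2 * ((mval b0 b1)^n)^2 := by
    have : ∀ σ ∈ LFin n, ∑ τ ∈ LFin n, (hval b0 b1 (true :: σ) (false :: τ))^2
        = ((1 - b0 - b1)^2 * (mval b0 b1)^n) * (pval b0 b1 σ)^2 := by
      intro σ _
      have step : ∀ τ ∈ LFin n, (hval b0 b1 (true :: σ) (false :: τ))^2
          = ((1 - b0 - b1)^2 * (pval b0 b1 σ)^2) * (pval b0 b1 τ)^2 := by
        intro τ _
        rw [hval_tf]; ring
      rw [Finset.sum_congr rfl step, ← Finset.mul_sum, Msum]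
      ring
    rw [Finset.sum_congr rfl this, ← Finset.mul_sum, Msum]
    ring
  have split1 : ∑ σ ∈ LFin n, ∑ τ ∈ LFin (n+1), (hval b0 b1 (false :: σ) τ)^2
      = (∑ σ ∈ LFin n, ∑ τ ∈ LFin n, (hval b0 b1 (false :: σ) (false :: τ))^2)
        + ∑ σ ∈ LFin n, ∑ τ ∈ LFin n, (hval b0 b1 (false :: σ) (true :: τ))^2 := by
    rw [← Finset.sum_add_distrib]
    exact Finset.sum_congr rfl (fun σ _ => inner _)
  have split2 : ∑ σ ∈ LFin n, ∑ τ ∈ LFin (n+1), (hval b0 b1 (true :: σ) τ)^2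
      = (∑ σ ∈ LFin n, ∑ τ ∈ LFin n, (hval b0 b1 (true :: σ) (false :: τ))^2)
        + ∑ σ ∈ LFin n, ∑ τ ∈ LFin n, (hval b0 b1 (true :: σ) (true :: τ))^2 := by
    rw [← Finset.sum_add_distrib]
    exact Finset.sum_congr rfl (fun σ _ => inner _)
  rw [split1, split2, eFF, eTT, eFT, eTF, mval]
  ring

noncomputable def Cc : ℝ := 1 + 2 * (1 - b0 - b1)^2 / (mval b0 b1 * (mval b0 b1 - 1))

lemma Sval_le (hm : 1 < mval b0 b1) (n : ℕ) :
    Sval b0 b1 n ≤ Cc b0 b1 * ((mval b0 b1)^n)^2 := by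
  have hm0 : 0 < mval b0 b1 := by linarith
  have hmm : 0 < mval b0 b1 * (mval b0 b1 - 1) := by nlinarith
  have hCc : Cc b0 b1 * (mval b0 b1 * (mval b0 b1 - 1))
      = mval b0 b1 * (mval b0 b1 - 1) + 2 * (1 - b0 - b1)^2 := by
    rw [Cc]
    field_simp
    rw [mul_add, mul_div_cancel₀ _ (by linarith : mval b0 b1 - 1 ≠ 0)]
    ring
  have hC1 : 1 ≤ Cc b0 b1 := by
    rw [Cc]
    have : 0 ≤ 2 * (1 - b0 - b1)^2 / (mval b0 b1 * (mval b0 b1 - 1)) :=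
      div_nonneg (by positivity) hmm.le
    linarith
  induction n with
  | zero => simpa [Sval_zero] using hC1
  | succ n ih =>
    rw [Sval_succ]
    have hpow : 0 < ((mval b0 b1)^n)^2 := by positivity
    have key : mval b0 b1 * Cc b0 b1 + 2 * (1 - b0 - b1)^2
        ≤ Cc b0 b1 * (mval b0 b1)^2 := by nlinarith
    calc mval b0 b1 * Sval b0 b1 n + 2 * (1 - b0 - b1)^2 * ((mval b0 b1)^n)^2
        ≤ mval b0 b1 * (Cc b0 b1 * ((mval b0 b1)^n)^2)
          + 2 * (1 - b0 - b1)^2 * ((mval b0 b1)^n)^2 := by nlinarith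
      _ = (mval b0 b1 * Cc b0 b1 + 2 * (1 - b0 - b1)^2) * ((mval b0 b1)^n)^2 := by ring
      _ ≤ (Cc b0 b1 * (mval b0 b1)^2) * ((mval b0 b1)^n)^2 := by nlinarith
      _ = Cc b0 b1 * ((mval b0 b1)^(n+1))^2 := by ring
end Stmt3A
namespace Stmt3A

variable {b0 b1 : ℝ}

lemma asymWeight_nonneg (h0 : 0 ≤ b0) (h1 : 0 ≤ b1) (hs : b0 + b1 ≤ 1)
    (A : Finset (List Bool)) (σ : List Bool) : 0 ≤ asymWeight b0 b1 A σ := by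
  rw [asymWeight]
  split
  · linarith
  · split
    · exact h0
    · exact h1

lemma Wt_nonneg (h0 : 0 ≤ b0) (h1 : 0 ≤ b1) (hs : b0 + b1 ≤ 1)
    (n : ℕ) (A : Finset (List Bool)) : 0 ≤ Wt b0 b1 n A :=
  Finset.prod_nonneg (fun σ _ => asymWeight_nonneg h0 h1 hs A σ)

lemma cval_nonneg (h0 : b0 ≤ 1) (h1 : b1 ≤ 1) (b : Bool) : 0 ≤ cval b0 b1 b := by
  rw [cval]; split <;> linarith

lemma pval_nonneg (h0 : b0 ≤ 1) (h1 : b1 ≤ 1) (σ : List Bool) : 0 ≤ pval b0 b1 σ := by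
  induction σ with
  | nil => norm_num [pval]
  | cons a σ ih => exact mul_nonneg (cval_nonneg h0 h1 a) ih

lemma hval_nonneg (h0 : b0 ≤ 1) (h1 : b1 ≤ 1) (hs : b0 + b1 ≤ 1) (σ τ : List Bool) :
    0 ≤ hval b0 b1 σ τ := by
  induction σ generalizing τ with
  | nil => cases τ <;> norm_num [hval]
  | cons a σ ih =>
    cases τ with
    | nil => norm_num [hval]
    | cons b τ =>
      rw [hval]
      split
      · exact mul_nonneg (cval_nonneg h0 h1 a) (ih τ)
      · exact mul_nonneg (by linarith)
          (mul_nonneg (pval_nonneg h0 h1 σ) (pval_nonneg h0 h1 τ))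

lemma mval_gt_one (h0 : 0 < b0) (h1 : 0 < b1) (hs : b0 + b1 < 1)
    (hcase : (b0 + b1) / 2 < 1 - Real.sqrt 2 / 2 ∨
      (1 - Real.sqrt 2 / 2 ≤ (b0 + b1) / 2 ∧
        Real.sqrt (8 * ((b0 + b1) / 2) - 4 * ((b0 + b1) / 2) ^ 2 - 2) < |b0 - b1|)) :
    1 < mval b0 b1 := by
  have hs2 : Real.sqrt 2 ^ 2 = 2 := Real.sq_sqrt (by norm_num)
  have hs2pos : 0 < Real.sqrt 2 := Real.sqrt_pos.2 (by norm_num)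
  rw [mval]
  rcases hcase with hc | ⟨hb, hd⟩
  · -- b < 1 - √2/2, so 1 - b > √2/2 > 0
    have hu : Real.sqrt 2 / 2 < 1 - (b0 + b1) / 2 := by linarith
    nlinarith [sq_nonneg (b0 - b1), sq_nonneg (1 - (b0+b1)/2 - Real.sqrt 2 / 2)]
  · set b := (b0 + b1) / 2 with hbdef
    have hble : b < 1/2 := by rw [hbdef]; linarith
    have hx : 0 ≤ 8 * b - 4 * b ^ 2 - 2 := by
      have h1b : 1 - b ≤ Real.sqrt 2 / 2 := by linarith
      have h1bpos : 0 < 1 - b := by linarith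
      nlinarith
    have hd2 : 8 * b - 4 * b ^ 2 - 2 < (b0 - b1) ^ 2 := by
      have := Real.sq_sqrt hx
      have habs : Real.sqrt (8 * b - 4 * b ^ 2 - 2) < |b0 - b1| := hd
      nlinarith [abs_nonneg (b0 - b1), sq_abs (b0 - b1), Real.sqrt_nonneg (8 * b - 4 * b ^ 2 - 2)]
    have hbb : b0 + b1 = 2 * b := by rw [hbdef]; ring
    nlinarith

end Stmt3A
namespace Stmt3A

instance : BorelSpace CC := ⟨rfl⟩

lemma isOpen_cyl (σ : List Bool) : IsOpen (cyl σ) := by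
  have : cyl σ = ⋂ i : Fin σ.length, {x : Cantor | x i = σ.get i} := by
    ext x; simp [cyl, Set.mem_iInter]
  rw [this]
  apply isOpen_iInter_of_finite
  intro i
  show IsOpen ((fun x : Cantor => x (i : ℕ)) ⁻¹' {σ.get i})
  exact (continuous_apply ((i : ℕ))).isOpen_preimage _ (isOpen_discrete _)

/-- the "hit" set -/
def hitSet (σ : List Bool) : Set CC := {K : CC | (K.1 ∩ cyl σ).Nonempty}

lemma isOpen_hitSet (σ : List Bool) : IsOpen (hitSet σ) := by
  apply TopologicalSpace.GenerateOpen.basic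
  exact Set.mem_union_left _ ⟨cyl σ, isOpen_cyl σ, rfl⟩

lemma measurableSet_hitSet (σ : List Bool) : MeasurableSet (hitSet σ) :=
  (isOpen_hitSet σ).measurableSet

def allLe (n : ℕ) : Finset (List Bool) := (Finset.range (n+1)).biUnion LFin

lemma mem_allLe {n : ℕ} {σ : List Bool} : σ ∈ allLe n ↔ σ.length ≤ n := by
  simp [allLe, mem_LFin, Nat.lt_succ_iff]

open Classical in
noncomputable def treeOf (n : ℕ) (K : CC) : Finset (List Bool) :=
  (allLe n).filter (fun σ => (K.1 ∩ cyl σ).Nonempty)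

open Classical in
lemma mem_treeOf {n : ℕ} {K : CC} {σ : List Bool} :
    σ ∈ treeOf n K ↔ σ.length ≤ n ∧ (K.1 ∩ cyl σ).Nonempty := by
  rw [treeOf]
  simp [Finset.mem_filter, mem_allLe]

lemma cyl_nil : cyl [] = Set.univ := by
  ext x
  simp only [Set.mem_univ, iff_true]
  intro i
  exact absurd i.2 (by simp)

lemma cyl_anti {σ τ : List Bool} (h : σ <+: τ) : cyl τ ⊆ cyl σ := by
  intro x hx
  intro i
  have hlen : (i : ℕ) < τ.length := lt_of_lt_of_le i.2 h.length_le
  have := hx ⟨(i : ℕ), hlen⟩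
  rw [this]
  simp only [List.get_eq_getElem]
  exact (List.IsPrefix.getElem h i.2).symm

lemma cyl_extend {x : Cantor} {σ : List Bool} (hx : x ∈ cyl σ) :
    x ∈ cyl (σ ++ [x σ.length]) := by
  intro i
  rcases Nat.lt_succ_iff_lt_or_eq.1 (by simpa using i.2) with h | h
  · have := hx ⟨(i : ℕ), h⟩
    rw [this]
    simp only [List.get_eq_getElem]
    rw [List.getElem_append_left h]
  · simp only [List.get_eq_getElem, h]
    rw [List.getElem_append_right (le_of_eq rfl)]
    simp

lemma finTree_treeOf (n : ℕ) (K : CC) : FinTree n (treeOf n K) := by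
  refine ⟨⟨[], mem_treeOf.2 ⟨by simp, by rw [cyl_nil]; simpa using K.2.1⟩⟩, ?_, ?_, ?_⟩
  · intro σ hσ; exact (mem_treeOf.1 hσ).1
  · intro σ τ hp hτ
    rcases mem_treeOf.1 hτ with ⟨hlen, hne⟩
    exact mem_treeOf.2 ⟨le_trans hp.length_le hlen,
      hne.mono (Set.inter_subset_inter_right _ (cyl_anti hp))⟩
  · intro σ hσ hlen
    rcases mem_treeOf.1 hσ with ⟨_, x, hxK, hxc⟩
    have hmem : σ ++ [x σ.length] ∈ treeOf n K :=
      mem_treeOf.2 ⟨by simpa using hlen, ⟨x, hxK, cyl_extend hxc⟩⟩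
    cases hc : x σ.length
    · left; rwa [hc] at hmem
    · right; rwa [hc] at hmem

lemma treeOf_mem_Trees (n : ℕ) (K : CC) : treeOf n K ∈ Trees n :=
  mem_Trees_of_finTree (finTree_treeOf n K)

lemma mem_UA_iff {n : ℕ} {A : Finset (List Bool)} (hA : ∀ σ ∈ A, σ.length ≤ n) (K : CC) :
    K ∈ UA n A ↔ A = treeOf n K := by
  constructor
  · intro h
    apply Finset.ext
    intro σ
    by_cases hlen : σ.length ≤ n
    · rw [mem_treeOf]
      constructor
      · intro hσ; exact ⟨hlen, (h σ hlen).1 hσ⟩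
      · intro hσ; exact (h σ hlen).2 hσ.2
    · constructor
      · intro hσ; exact absurd (hA σ hσ) hlen
      · intro hσ; exact absurd (mem_treeOf.1 hσ).1 hlen
  · rintro rfl
    intro σ hlen
    rw [mem_treeOf]
    constructor
    · intro h; exact h.2
    · intro h; exact ⟨hlen, h⟩

variable {b0 b1 : ℝ}

lemma measure_cell (h0 : 0 < b0) (h1 : 0 < b1) (hs : b0 + b1 < 1)
    {μ : Measure CC} (hμ : IsBranching b0 b1 μ) {n : ℕ} {A : Finset (List Bool)}
    (hA : A ∈ Trees n) : μ (UA n A) = ENNReal.ofReal (Wt b0 b1 n A) := by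
  have : IsProbabilityMeasure μ := hμ.1
  have hfin : μ (UA n A) ≠ ⊤ := measure_ne_top μ _
  have h2 := hμ.2 n A (finTree_of_mem_Trees hA)
  rw [show Wt b0 b1 n A = ∏ σ ∈ A.filter (fun σ => σ.length < n), asymWeight b0 b1 A σ from rfl]
  rw [← h2, ENNReal.ofReal_toReal hfin]

lemma measure_tree_event (h0 : 0 < b0) (h1 : 0 < b1) (hs : b0 + b1 < 1)
    {μ : Measure CC} (hμ : IsBranching b0 b1 μ) (n : ℕ)
    (S : Finset (Finset (List Bool))) (hS : S ⊆ Trees n)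
    (E : Set CC) (hE : MeasurableSet E) (hmem : ∀ K : CC, K ∈ E ↔ treeOf n K ∈ S) :
    μ E = ENNReal.ofReal (∑ A ∈ S, Wt b0 b1 n A) := by
  have : IsProbabilityMeasure μ := hμ.1
  have hWnn : ∀ A : Finset (List Bool), 0 ≤ Wt b0 b1 n A :=
    Wt_nonneg h0.le h1.le hs.le n
  -- covering bound for any subfamily
  have cover : ∀ (S' : Finset (Finset (List Bool))), S' ⊆ Trees n → ∀ (E' : Set CC),
      (∀ K : CC, K ∈ E' → treeOf n K ∈ S') → μ E' ≤ ∑ A ∈ S', ENNReal.ofReal (Wt b0 b1 n A) := by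
    intro S' hS' E' hmem'
    have hsub : E' ⊆ ⋃ A ∈ S', UA n A := by
      intro K hK
      refine Set.mem_biUnion (hmem' K hK) ?_
      rw [mem_UA_iff (fun σ hσ => (mem_treeOf.1 hσ).1) K]
    calc μ E' ≤ μ (⋃ A ∈ S', UA n A) := measure_mono hsub
      _ ≤ ∑ A ∈ S', μ (UA n A) := measure_biUnion_finset_le S' _
      _ = ∑ A ∈ S', ENNReal.ofReal (Wt b0 b1 n A) :=
          Finset.sum_congr rfl (fun A hA => measure_cell h0 h1 hs hμ (hS' hA))
  have hcompl : ∀ K : CC, K ∈ Eᶜ → treeOf n K ∈ Trees n \ S := by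
    intro K hK
    rw [Finset.mem_sdiff]
    exact ⟨treeOf_mem_Trees n K, fun hc => hK ((hmem K).2 hc)⟩
  have hEb : μ E ≤ ∑ A ∈ S, ENNReal.ofReal (Wt b0 b1 n A) :=
    cover S hS E (fun K hK => (hmem K).1 hK)
  have hEcb : μ Eᶜ ≤ ∑ A ∈ Trees n \ S, ENNReal.ofReal (Wt b0 b1 n A) :=
    cover _ (Finset.sdiff_subset) _ hcompl
  -- pass to reals
  have hsum_split : (∑ A ∈ S, Wt b0 b1 n A) + ∑ A ∈ Trees n \ S, Wt b0 b1 n A = 1 := by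
    rw [add_comm, Finset.sum_sdiff hS, sum_Wt_eq_one]
  have hE1 : (μ E).toReal ≤ ∑ A ∈ S, Wt b0 b1 n A := by
    rw [← ENNReal.ofReal_sum_of_nonneg (fun A _ => hWnn A)] at hEb
    exact ENNReal.toReal_le_of_le_ofReal (Finset.sum_nonneg (fun A _ => hWnn A)) hEb
  have hE2 : (μ Eᶜ).toReal ≤ ∑ A ∈ Trees n \ S, Wt b0 b1 n A := by
    rw [← ENNReal.ofReal_sum_of_nonneg (fun A _ => hWnn A)] at hEcb
    exact ENNReal.toReal_le_of_le_ofReal (Finset.sum_nonneg (fun A _ => hWnn A)) hEcb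
  have hadd : (μ E).toReal + (μ Eᶜ).toReal = 1 := by
    rw [← ENNReal.toReal_add (measure_ne_top μ _) (measure_ne_top μ _)]
    rw [measure_add_measure_compl hE]
    simp
  have : (μ E).toReal = ∑ A ∈ S, Wt b0 b1 n A := by linarith
  rw [← this, ENNReal.ofReal_toReal (measure_ne_top μ _)]

lemma measure_hit_inter (h0 : 0 < b0) (h1 : 0 < b1) (hs : b0 + b1 < 1)
    {μ : Measure CC} (hμ : IsBranching b0 b1 μ) {n : ℕ} {σ τ : List Bool}
    (hσ : σ.length = n) (hτ : τ.length = n) :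
    μ (hitSet σ ∩ hitSet τ) = ENNReal.ofReal (hval b0 b1 σ τ) := by
  classical
  have hmem : ∀ K : CC, K ∈ hitSet σ ∩ hitSet τ ↔
      treeOf n K ∈ (Trees n).filter (fun A => σ ∈ A ∧ τ ∈ A) := by
    intro K
    rw [Finset.mem_filter]
    constructor
    · rintro ⟨hKσ, hKτ⟩
      exact ⟨treeOf_mem_Trees n K,
        mem_treeOf.2 ⟨hσ.le, hKσ⟩, mem_treeOf.2 ⟨hτ.le, hKτ⟩⟩
    · rintro ⟨-, h1', h2'⟩
      exact ⟨(mem_treeOf.1 h1').2, (mem_treeOf.1 h2').2⟩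
  rw [measure_tree_event h0 h1 hs hμ n _ (Finset.filter_subset _ _) _
    (((measurableSet_hitSet σ)).inter (measurableSet_hitSet τ)) hmem]
  rw [Finset.sum_filter, hsum n σ τ hσ hτ]

lemma measure_hit (h0 : 0 < b0) (h1 : 0 < b1) (hs : b0 + b1 < 1)
    {μ : Measure CC} (hμ : IsBranching b0 b1 μ) {n : ℕ} {σ : List Bool}
    (hσ : σ.length = n) :
    μ (hitSet σ) = ENNReal.ofReal (pval b0 b1 σ) := by
  classical
  have hmem : ∀ K : CC, K ∈ hitSet σ ↔
      treeOf n K ∈ (Trees n).filter (fun A => σ ∈ A) := by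
    intro K
    rw [Finset.mem_filter]
    constructor
    · intro hKσ
      exact ⟨treeOf_mem_Trees n K, mem_treeOf.2 ⟨hσ.le, hKσ⟩⟩
    · rintro ⟨-, h1'⟩
      exact (mem_treeOf.1 h1').2
  rw [measure_tree_event h0 h1 hs hμ n _ (Finset.filter_subset _ _) _
    (measurableSet_hitSet σ) hmem]
  rw [Finset.sum_filter, gsum n σ hσ]

end Stmt3A
namespace Stmt3A

instance : CompactSpace Cantor := by infer_instance

def firstn (x : Cantor) (n : ℕ) : List Bool := List.ofFn (fun i : Fin n => x i)

@[simp] lemma length_firstn (x : Cantor) (n : ℕ) : (firstn x n).length = n := by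
  simp [firstn]

lemma mem_cyl_firstn (x : Cantor) (n : ℕ) : x ∈ cyl (firstn x n) := by
  intro i
  simp [firstn]
  exact (List.get_ofFn (fun j : Fin n => x j) i).symm

lemma eq_firstn_of_mem_cyl {x : Cantor} {σ : List Bool} (h : x ∈ cyl σ) :
    σ = firstn x σ.length := by
  apply List.ext_getElem (by simp)
  intro i h1 h2
  have := h ⟨i, h1⟩
  simp only [List.get_eq_getElem] at this
  rw [← this]
  simp [firstn]

lemma isClosed_cyl (σ : List Bool) : IsClosed (cyl σ) := by
  have : cyl σ = ⋂ i : Fin σ.length, {x : Cantor | x i = σ.get i} := by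
    ext x; simp [cyl, Set.mem_iInter]
  rw [this]
  apply isClosed_iInter
  intro i
  show IsClosed ((fun x : Cantor => x (i : ℕ)) ⁻¹' {σ.get i})
  exact IsClosed.preimage (continuous_apply ((i : ℕ))) (isClosed_discrete _)

lemma mem_of_closed_of_hits {F : Set Cantor} (hF : IsClosed F) (x : Cantor)
    (h : ∀ n, (F ∩ cyl (firstn x n)).Nonempty) : x ∈ F := by
  rw [← hF.closure_eq]
  rw [mem_closure_iff]
  intro o ho hxo
  rcases isOpen_pi_iff.1 ho x hxo with ⟨I, u, hu, hsub⟩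
  set n := (I.sup id) + 1 with hn
  have hIlt : ∀ a ∈ I, a < n := by
    intro a ha
    have : a ≤ I.sup id := Finset.le_sup (f := id) ha
    omega
  rcases h n with ⟨z, hzF, hzc⟩
  refine ⟨z, ?_, hzF⟩
  apply hsub
  intro a ha
  have hza : z a = x a := by
    have h2 := hzc ⟨a, by simpa using hIlt a ha⟩
    simp only [firstn, List.get_eq_getElem, List.getElem_ofFn] at h2
    exact h2
  rw [hza]
  exact (hu a ha).2

/-- the event that some string of length `n` is hit by both components -/
def En (n : ℕ) : Set (CC × CC) := ⋃ σ ∈ LFin n, (hitSet σ ×ˢ hitSet σ)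

lemma measurableSet_En (n : ℕ) : MeasurableSet (En n) := by
  apply Finset.measurableSet_biUnion
  intro σ _
  exact (measurableSet_hitSet σ).prod (measurableSet_hitSet σ)

lemma En_antitone {n m : ℕ} (h : n ≤ m) : En m ⊆ En n := by
  intro p hp
  rcases Set.mem_iUnion₂.1 hp with ⟨σ, hσ, hpσ⟩
  have hlen : σ.length = m := mem_LFin.1 hσ
  refine Set.mem_iUnion₂.2 ⟨σ.take n, mem_LFin.2 (by simp [hlen, h]), ?_⟩
  have hpre : σ.take n <+: σ := List.take_prefix n σ
  have hc := cyl_anti hpre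
  exact ⟨hpσ.1.mono (Set.inter_subset_inter_right _ hc),
    hpσ.2.mono (Set.inter_subset_inter_right _ hc)⟩

lemma iInter_En : (⋂ n, En n) = {p : CC × CC | (p.1.1 ∩ p.2.1).Nonempty} := by
  apply Set.eq_of_subset_of_subset
  · intro p hp
    classical
    set K := p.1 with hK
    set R := p.2 with hR
    set G : ℕ → Finset (List Bool) := fun n =>
      (LFin n).filter (fun σ => (K.1 ∩ cyl σ).Nonempty ∧ (R.1 ∩ cyl σ).Nonempty) with hG
    set D : ℕ → Set Cantor := fun n => ⋃ σ ∈ G n, cyl σ with hD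
    have hDcl : ∀ n, IsClosed (D n) := by
      intro n
      exact Set.Finite.isClosed_biUnion (Finset.finite_toSet _) (fun σ _ => isClosed_cyl σ)
    have hDne : ∀ n, (D n).Nonempty := by
      intro n
      have hpn := Set.mem_iInter.1 hp n
      rcases Set.mem_iUnion₂.1 hpn with ⟨σ, hσ, hp1, hp2⟩
      have hp1' := hp1
      rcases hp1 with ⟨x, _, hxc⟩
      exact ⟨x, Set.mem_biUnion (Finset.mem_filter.2 ⟨hσ, hp1', hp2⟩) hxc⟩
    have hDmono : ∀ n, D (n+1) ⊆ D n := by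
      intro n y hy
      rcases Set.mem_iUnion₂.1 hy with ⟨σ, hσ, hyc⟩
      rcases Finset.mem_filter.1 hσ with ⟨hσl, h1, h2⟩
      have hlen : σ.length = n + 1 := mem_LFin.1 hσl
      have hpre : σ.take n <+: σ := List.take_prefix n σ
      have hc := cyl_anti hpre
      refine Set.mem_biUnion (Finset.mem_filter.2 ⟨mem_LFin.2 (by simp [hlen]), ?_, ?_⟩) (hc hyc)
      · exact h1.mono (Set.inter_subset_inter_right _ hc)
      · exact h2.mono (Set.inter_subset_inter_right _ hc)
    have hcompact : IsCompact (D 0) := (hDcl 0).isCompact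
    have hne := IsCompact.nonempty_iInter_of_sequence_nonempty_isCompact_isClosed
      D hDmono hDne hcompact hDcl
    rcases hne with ⟨x, hx⟩
    have hhits : ∀ n, (K.1 ∩ cyl (firstn x n)).Nonempty ∧ (R.1 ∩ cyl (firstn x n)).Nonempty := by
      intro n
      have hxn := Set.mem_iInter.1 hx n
      rcases Set.mem_iUnion₂.1 hxn with ⟨σ, hσ, hxc⟩
      rcases Finset.mem_filter.1 hσ with ⟨hσl, h1, h2⟩
      have hlen : σ.length = n := mem_LFin.1 hσl
      have : σ = firstn x n := by
        have := eq_firstn_of_mem_cyl hxc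
        rwa [hlen] at this
      rw [← this]
      exact ⟨h1, h2⟩
    have hxK : x ∈ K.1 := mem_of_closed_of_hits K.2.2 x (fun n => (hhits n).1)
    have hxR : x ∈ R.1 := mem_of_closed_of_hits R.2.2 x (fun n => (hhits n).2)
    exact ⟨x, hxK, hxR⟩
  · rintro p ⟨x, hx1, hx2⟩
    apply Set.mem_iInter.2
    intro n
    exact Set.mem_iUnion₂.2 ⟨firstn x n, mem_LFin.2 (by simp),
      ⟨x, hx1, mem_cyl_firstn x n⟩, ⟨x, hx2, mem_cyl_firstn x n⟩⟩

end Stmt3A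
namespace Stmt3A

lemma ind_mul_ind {α : Type*} (S T : Set α) (p : α) :
    S.indicator (1 : α → ENNReal) p * T.indicator 1 p = (S ∩ T).indicator 1 p := by
  classical
  by_cases hS : p ∈ S <;> by_cases hT : p ∈ T <;>
    simp [Set.indicator_apply, hS, hT, Set.mem_inter_iff]


lemma lint_ind_sum {ι : Type*} (ν : Measure (CC × CC)) (s : Finset ι) (S : ι → Set (CC × CC))
    (hS : ∀ i, MeasurableSet (S i)) :
    ∫⁻ p, ∑ i ∈ s, (S i).indicator 1 p ∂ν = ∑ i ∈ s, ν (S i) := by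
  rw [lintegral_finset_sum (μ := ν) s
    (f := fun i p => (S i).indicator 1 p)
    (fun i _ => measurable_const.indicator (hS i))]
  exact Finset.sum_congr rfl (fun i _ => lintegral_indicator_one (hS i))

variable {b0 b1 : ℝ}

lemma Cc_ge_one (hm : 1 < mval b0 b1) : 1 ≤ Cc b0 b1 := by
  have hmm : 0 < mval b0 b1 * (mval b0 b1 - 1) := by nlinarith
  have : 0 ≤ 2 * (1 - b0 - b1)^2 / (mval b0 b1 * (mval b0 b1 - 1)) :=
    div_nonneg (by positivity) hmm.le
  rw [Cc]; linarith

lemma measure_En_ge (h0 : 0 < b0) (h1 : 0 < b1) (hs : b0 + b1 < 1)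
    {μ : Measure CC} (hμ : IsBranching b0 b1 μ) (hm : 1 < mval b0 b1) (n : ℕ) :
    ENNReal.ofReal (1 / Cc b0 b1) ≤ (μ.prod μ) (En n) := by
  classical
  haveI : IsProbabilityMeasure μ := hμ.1
  set ν := μ.prod μ with hν
  set f : CC × CC → ENNReal :=
    fun p => ∑ σ ∈ LFin n, (hitSet σ ×ˢ hitSet σ).indicator 1 p with hf
  have hmeas : ∀ σ : List Bool, MeasurableSet (hitSet σ ×ˢ hitSet σ : Set (CC × CC)) :=
    fun σ => (measurableSet_hitSet σ).prod (measurableSet_hitSet σ)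
  have hfm : Measurable f :=
    Finset.measurable_sum _ (fun σ _ => measurable_const.indicator (hmeas σ))
  have hmpos : (0:ℝ) < mval b0 b1 := by linarith
  have hmn_pos : (0:ℝ) < (mval b0 b1)^n := by positivity
  -- first moment
  have hintf : ∫⁻ p, f p ∂ν = ENNReal.ofReal ((mval b0 b1)^n) := by
    have e1 : ∫⁻ p, f p ∂ν = ∑ σ ∈ LFin n, ν (hitSet σ ×ˢ hitSet σ) :=
      lint_ind_sum ν (LFin n) _ hmeas
    rw [e1]
    have step : ∀ σ ∈ LFin n,
        ν (hitSet σ ×ˢ hitSet σ) = ENNReal.ofReal ((pval b0 b1 σ)^2) := by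
      intro σ hσ
      rw [hν, Measure.prod_prod,
        measure_hit h0 h1 hs hμ (mem_LFin.1 hσ),
        ← ENNReal.ofReal_mul (pval_nonneg (by linarith) (by linarith) σ), sq]
    rw [Finset.sum_congr rfl step,
      ← ENNReal.ofReal_sum_of_nonneg (fun σ _ => sq_nonneg _), Msum]
  -- second moment
  have hintf2 : ∫⁻ p, (f p) * (f p) ∂ν = ENNReal.ofReal (Sval b0 b1 n) := by
    have hexpand : ∀ p, f p * f p
        = ∑ σ ∈ LFin n, ∑ τ ∈ LFin n,
            (((hitSet σ ∩ hitSet τ) ×ˢ (hitSet σ ∩ hitSet τ)) : Set (CC × CC)).indicator 1 p := by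
      intro p
      rw [hf, Finset.sum_mul_sum]
      apply Finset.sum_congr rfl
      intro σ _
      apply Finset.sum_congr rfl
      intro τ _
      rw [ind_mul_ind, Set.prod_inter_prod]
    have hmeas2 : ∀ σ τ : List Bool,
        MeasurableSet (((hitSet σ ∩ hitSet τ) ×ˢ (hitSet σ ∩ hitSet τ)) : Set (CC × CC)) :=
      fun σ τ => ((measurableSet_hitSet σ).inter (measurableSet_hitSet τ)).prod
        ((measurableSet_hitSet σ).inter (measurableSet_hitSet τ))
    calc ∫⁻ p, (f p) * (f p) ∂ν
        = ∫⁻ p, ∑ σ ∈ LFin n, ∑ τ ∈ LFin n,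
            (((hitSet σ ∩ hitSet τ) ×ˢ (hitSet σ ∩ hitSet τ)) : Set (CC × CC)).indicator 1 p ∂ν := by
          apply lintegral_congr
          exact hexpand
      _ = ∑ q ∈ (LFin n) ×ˢ (LFin n),
            ν (((hitSet q.1 ∩ hitSet q.2) ×ˢ (hitSet q.1 ∩ hitSet q.2)) : Set (CC × CC)) := by
          rw [← lint_ind_sum ν ((LFin n) ×ˢ (LFin n))
            (fun q => ((hitSet q.1 ∩ hitSet q.2) ×ˢ (hitSet q.1 ∩ hitSet q.2) : Set (CC × CC)))
            (fun q => hmeas2 q.1 q.2)]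
          apply lintegral_congr
          intro p
          rw [Finset.sum_product]
      _ = ∑ σ ∈ LFin n, ∑ τ ∈ LFin n,
            ν (((hitSet σ ∩ hitSet τ) ×ˢ (hitSet σ ∩ hitSet τ)) : Set (CC × CC)) := by
          rw [Finset.sum_product]
      _ = ENNReal.ofReal (Sval b0 b1 n) := by
          rw [Sval, ENNReal.ofReal_sum_of_nonneg
            (fun σ _ => Finset.sum_nonneg (fun τ _ => sq_nonneg _))]
          apply Finset.sum_congr rfl
          intro σ hσ
          rw [ENNReal.ofReal_sum_of_nonneg (fun τ _ => sq_nonneg _)]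
          apply Finset.sum_congr rfl
          intro τ hτ
          rw [hν, Measure.prod_prod,
            measure_hit_inter h0 h1 hs hμ (mem_LFin.1 hσ) (mem_LFin.1 hτ),
            ← ENNReal.ofReal_mul (hval_nonneg (by linarith) (by linarith) hs.le σ τ), sq]
  -- Hölder
  set g : CC × CC → ENNReal := (En n).indicator 1 with hg
  have hgm : Measurable g := measurable_const.indicator (measurableSet_En n)
  have hfg : ∀ p, (f * g) p = f p := by
    intro p
    show f p * g p = f p
    by_cases hp : p ∈ En n
    · rw [hg, Set.indicator_of_mem hp]
      simp
    · have hfp : f p = 0 := by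
        rw [hf]
        apply Finset.sum_eq_zero
        intro σ hσ
        apply Set.indicator_of_notMem
        intro hc
        exact hp (Set.mem_biUnion hσ hc)
      rw [hfp, zero_mul]
  have hconj : Real.HolderConjugate 2 2 := Real.HolderConjugate.two_two
  have holder := ENNReal.lintegral_mul_le_Lp_mul_Lq ν hconj hfm.aemeasurable hgm.aemeasurable
  rw [lintegral_congr hfg, hintf] at holder
  -- compute the two integrals in holder
  have hfsq : ∀ p : CC × CC, f p ^ (2:ℝ) = f p * f p := by
    intro p
    rw [show (2:ℝ) = ((2:ℕ):ℝ) from by norm_num, ENNReal.rpow_natCast, sq]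
  have hgsq : ∀ p : CC × CC, g p ^ (2:ℝ) = g p := by
    intro p
    rw [hg]
    by_cases hp : p ∈ En n
    · rw [Set.indicator_of_mem hp]
      simp [ENNReal.one_rpow]
    · rw [Set.indicator_of_notMem hp]
      exact ENNReal.zero_rpow_of_pos (by norm_num)
  rw [lintegral_congr hfsq, hintf2, lintegral_congr hgsq,
    lintegral_indicator_one (measurableSet_En n)] at holder
  -- now holder : ofReal (m^n) ≤ (ofReal (Sval n))^(1/2) * (ν (En n))^(1/2)
  set s := ENNReal.ofReal (Sval b0 b1 n) with hsdef
  set e := ν (En n) with hedef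
  have hetop : e ≠ ⊤ := measure_ne_top ν _
  have hstop : s ≠ ⊤ := ENNReal.ofReal_ne_top
  have hane : ENNReal.ofReal ((mval b0 b1)^n) ≠ 0 := (ENNReal.ofReal_pos.2 hmn_pos).ne'
  have he0 : e ≠ 0 := by
    intro hc
    rw [hc] at holder
    rw [ENNReal.zero_rpow_of_pos (by norm_num), mul_zero] at holder
    exact hane (le_antisymm holder zero_le)
  have hs0 : s ≠ 0 := by
    intro hc
    rw [hc] at holder
    rw [ENNReal.zero_rpow_of_pos (by norm_num), zero_mul] at holder
    exact hane (le_antisymm holder zero_le)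
  have hsq : ENNReal.ofReal ((mval b0 b1)^n) * ENNReal.ofReal ((mval b0 b1)^n) ≤ s * e := by
    calc ENNReal.ofReal ((mval b0 b1)^n) * ENNReal.ofReal ((mval b0 b1)^n)
        ≤ (s ^ (1/2:ℝ) * e ^ (1/2:ℝ)) * (s ^ (1/2:ℝ) * e ^ (1/2:ℝ)) :=
          mul_le_mul' holder holder
      _ = (s ^ (1/2:ℝ) * s ^ (1/2:ℝ)) * (e ^ (1/2:ℝ) * e ^ (1/2:ℝ)) := by ring
      _ = s * e := by
          rw [← ENNReal.rpow_add _ _ hs0 hstop, ← ENNReal.rpow_add _ _ he0 hetop]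
          norm_num
  have hsle : s ≤ ENNReal.ofReal (Cc b0 b1 * ((mval b0 b1)^n)^2) := by
    rw [hsdef]
    exact ENNReal.ofReal_le_ofReal (Sval_le b0 b1 hm n)
  have hkey : ENNReal.ofReal (((mval b0 b1)^n)^2)
      ≤ e * ENNReal.ofReal (Cc b0 b1 * ((mval b0 b1)^n)^2) := by
    calc ENNReal.ofReal (((mval b0 b1)^n)^2)
        = ENNReal.ofReal ((mval b0 b1)^n) * ENNReal.ofReal ((mval b0 b1)^n) := by
          rw [← ENNReal.ofReal_mul hmn_pos.le, sq]
      _ ≤ s * e := hsq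
      _ ≤ ENNReal.ofReal (Cc b0 b1 * ((mval b0 b1)^n)^2) * e :=
          mul_le_mul_left hsle e
      _ = e * ENNReal.ofReal (Cc b0 b1 * ((mval b0 b1)^n)^2) := mul_comm _ _
  have hCpos : (0:ℝ) < Cc b0 b1 := lt_of_lt_of_le one_pos (Cc_ge_one hm)
  have hden_pos : (0:ℝ) < Cc b0 b1 * ((mval b0 b1)^n)^2 := by positivity
  have hdiv := (ENNReal.div_le_iff_le_mul
    (Or.inl (by simp [ENNReal.ofReal_pos.2 hden_pos, ne_of_gt])) (Or.inl ENNReal.ofReal_ne_top)).2 hkey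
  calc ENNReal.ofReal (1 / Cc b0 b1)
      = ENNReal.ofReal ((((mval b0 b1)^n)^2) / (Cc b0 b1 * ((mval b0 b1)^n)^2)) := by
        congr 1
        field_simp
    _ = ENNReal.ofReal (((mval b0 b1)^n)^2) / ENNReal.ofReal (Cc b0 b1 * ((mval b0 b1)^n)^2) :=
        ENNReal.ofReal_div_of_pos hden_pos
    _ ≤ e := hdiv

end Stmt3A
/-- for the `(b₀,b₁)`-branching measure, if `b = (b₀+b₁)/2 < 1 − √2/2`, or
`b ≥ 1 − √2/2` and `|b₀ − b₁| > √(8b − 4b² − 2)`, then the collection of closed sets of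
positive capacity has positive measure. -/
theorem stmt_3 (b0 b1 : ℝ) (h0 : 0 < b0) (h1 : 0 < b1) (hsum : b0 + b1 < 1)
    (μ : Measure CC) (hμ : IsBranching b0 b1 μ)
    (hcase : (b0 + b1) / 2 < 1 - Real.sqrt 2 / 2 ∨
      (1 - Real.sqrt 2 / 2 ≤ (b0 + b1) / 2 ∧
        Real.sqrt (8 * ((b0 + b1) / 2) - 4 * ((b0 + b1) / 2) ^ 2 - 2) < |b0 - b1|)) :
    0 < μ {R : CC | 0 < cap μ R.1} := by
  classical
  haveI hμP : IsProbabilityMeasure μ := hμ.1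
  have hm : 1 < Stmt3A.mval b0 b1 := Stmt3A.mval_gt_one h0 h1 hsum hcase
  set ν := μ.prod μ with hν
  set D : Set (CC × CC) := ⋂ n, Stmt3A.En n with hD
  have hDmeas : MeasurableSet D := MeasurableSet.iInter (fun n => Stmt3A.measurableSet_En n)
  -- the intersection has positive measure
  have hdir : Directed (fun x1 x2 : Set (CC × CC) => x1 ⊇ x2) (fun n => Stmt3A.En n) := by
    intro a b
    exact ⟨max a b, Stmt3A.En_antitone (le_max_left a b), Stmt3A.En_antitone (le_max_right a b)⟩
  have hiInter : ν D = ⨅ n, ν (Stmt3A.En n) :=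
    Directed.measure_iInter (fun n => (Stmt3A.measurableSet_En n).nullMeasurableSet)
      hdir ⟨0, measure_ne_top ν _⟩
  have hCpos : (0:ℝ) < 1 / Stmt3A.Cc b0 b1 :=
    div_pos one_pos (lt_of_lt_of_le one_pos (Stmt3A.Cc_ge_one hm))
  have hlow : ENNReal.ofReal (1 / Stmt3A.Cc b0 b1) ≤ ν D := by
    rw [hiInter]
    exact le_iInf (fun n => Stmt3A.measure_En_ge h0 h1 hsum hμ hm n)
  have hνD : 0 < ν D := lt_of_lt_of_le (ENNReal.ofReal_pos.2 hCpos) hlow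
  -- conclude via Fubini
  by_contra hcon
  push_neg at hcon
  have hG0 : μ {R : CC | 0 < cap μ R.1} = 0 := le_antisymm hcon zero_le
  have hfub : ν D = ∫⁻ K, μ (Prod.mk K ⁻¹' D) ∂μ := Measure.prod_apply hDmeas
  have hslice : ∀ K : CC, Prod.mk K ⁻¹' D = {R : CC | (R.1 ∩ K.1).Nonempty} := by
    intro K
    rw [hD, Stmt3A.iInter_En]
    ext R
    simp only [Set.mem_preimage, Set.mem_setOf_eq]
    rw [Set.inter_comm]
  have hsub : {K : CC | μ (Prod.mk K ⁻¹' D) ≠ 0} ⊆ {R : CC | 0 < cap μ R.1} := by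
    intro K hK
    simp only [Set.mem_setOf_eq] at hK ⊢
    rw [hslice K] at hK
    have : μ {K' : CC | (K'.1 ∩ K.1).Nonempty} ≠ 0 := hK
    exact ENNReal.toReal_pos this (measure_ne_top μ _)
  have hae : (fun K => μ (Prod.mk K ⁻¹' D)) =ᶠ[MeasureTheory.ae μ] 0 := by
    rw [Filter.EventuallyEq, MeasureTheory.ae_iff]
    exact measure_mono_null hsub hG0
  have hzero : ∫⁻ K, μ (Prod.mk K ⁻¹' D) ∂μ = 0 :=
    (lintegral_eq_zero_iff (measurable_measure_prodMk_left hDmeas)).2 hae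
  rw [hfub, hzero] at hνD
  exact lt_irrefl _ hνD
end
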